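/- arXiv:math/0404278 — 6 statements merged into one kernel-verified Lean document; each statement's English description precedes it below -/
import Mathlib

section
/- Let S be a set with at least two elements, and let a ∈ S. In the free Lie algebra L[S] over ℤ generated by S, the centralizer of a (the set of x with [x,a] = 0) is exactly the ℤ-linear span of a. -/
open FreeLieAlgebra

universe v

variable {X : Type v}

/-- Bracket-monomial trees. -/
inductive BT (X : Type v) : Type v
  | leaf : X → BT X
  | node : BT X → BT X → BT X

namespace BT

/-- Evaluation into the free Lie algebra. -/
noncomputable def eval : BT X → FreeLieAlgebra ℤ X
  | leaf s => of ℤ s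
  | node u v => ⁅eval u, eval v⁆

/-- Weight of a tree w.r.t. a weight function on letters. -/
def wt (w : X → ℕ) : BT X → ℕ
  | leaf s => w s
  | node u v => wt w u + wt w v

def len (M : BT X) : ℕ := wt (fun _ => 1) M

lemma one_le_len (M : BT X) : 1 ≤ M.len := by
  induction M with
  | leaf s => exact le_refl 1
  | node u v hu hv => dsimp [len, wt] at *; omega

lemma wt_le_len (w : X → ℕ) (hw : ∀ s, w s ≤ 1) (M : BT X) : M.wt w ≤ M.len := by
  induction M with
  | leaf s => exact hw s
  | node u v hu hv => dsimp [len, wt] at *; omega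

end BT

section Span

open Submodule

variable (X)

/-- The span of evaluations of a set of trees. -/
noncomputable abbrev btSpan (𝓜 : Set (BT X)) : Submodule ℤ (FreeLieAlgebra ℤ X) :=
  Submodule.span ℤ (BT.eval '' 𝓜)

variable {X}

lemma lie_btSpan_mem {𝓜 𝓝 : Set (BT X)} {y z : FreeLieAlgebra ℤ X}
    (hy : y ∈ btSpan X 𝓜) (hz : z ∈ btSpan X 𝓝) :
    ⁅y, z⁆ ∈ btSpan X {M | ∃ u ∈ 𝓜, ∃ v ∈ 𝓝, M = BT.node u v} := by
  induction hy using Submodule.span_induction with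
  | mem y hy =>
    obtain ⟨u, hu, rfl⟩ := hy
    induction hz using Submodule.span_induction with
    | mem z hz =>
      obtain ⟨v, hv, rfl⟩ := hz
      exact subset_span ⟨BT.node u v, ⟨u, hu, v, hv, rfl⟩, rfl⟩
    | zero => simp
    | add z₁ z₂ _ _ h1 h2 => rw [lie_add]; exact add_mem h1 h2
    | smul c z _ h => rw [lie_smul]; exact smul_mem _ c h
  | zero => simp
  | add y₁ y₂ _ _ h1 h2 => rw [add_lie]; exact add_mem h1 h2
  | smul c y _ h => rw [smul_lie]; exact smul_mem _ c h

lemma lieSpan_range_of_eq_top :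
    LieSubalgebra.lieSpan ℤ (FreeLieAlgebra ℤ X) (Set.range (of ℤ)) = ⊤ := by
  set A := LieSubalgebra.lieSpan ℤ (FreeLieAlgebra ℤ X) (Set.range (of ℤ))
  have h : ∀ y : FreeLieAlgebra ℤ X, y ∈ A := by
    intro y
    let s : FreeLieAlgebra ℤ X →ₗ⁅ℤ⁆ A :=
      FreeLieAlgebra.lift ℤ (fun x => ⟨of ℤ x, LieSubalgebra.subset_lieSpan ⟨x, rfl⟩⟩)
    have : A.incl.comp s = LieHom.id := by
      apply FreeLieAlgebra.hom_ext
      intro x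
      simp only [LieHom.comp_apply, LieHom.id_apply, s, FreeLieAlgebra.lift_of_apply]
      exact congrArg A.incl (FreeLieAlgebra.lift_of_apply (R := ℤ) (L := A) _ x)
    have h2 : A.incl (s y) = y := by rw [← LieHom.comp_apply, this]; rfl
    rw [← h2]; exact (s y).2
  ext y; simp [h]

/-- Every element is in the span of bracket monomials. -/
theorem btSpan_univ_eq_top : btSpan X Set.univ = ⊤ := by
  have hle : LieSubalgebra.lieSpan ℤ (FreeLieAlgebra ℤ X) (Set.range (of ℤ)) ≤
      { toSubmodule := btSpan X Set.univ
        lie_mem' := by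
          intro y z hy hz
          have := lie_btSpan_mem (𝓜 := Set.univ) (𝓝 := Set.univ) hy hz
          exact Submodule.span_mono (Set.image_mono (by intro M _; trivial)) this } := by
    apply LieSubalgebra.lieSpan_le.2
    rintro _ ⟨x, rfl⟩
    exact Submodule.subset_span ⟨BT.leaf x, trivial, rfl⟩
  rw [lieSpan_range_of_eq_top] at hle
  rw [eq_top_iff]
  exact fun y hy => hle trivial

end Span
open scoped TensorProduct

noncomputable section Grading

abbrev GA : Type := AddMonoidAlgebra ℤ ℕ

/-- The grading homomorphism attached to a weight function. -/
noncomputable def Phi (w : X → ℕ) :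
    FreeLieAlgebra ℤ X →ₗ⁅ℤ⁆ (GA ⊗[ℤ] FreeLieAlgebra ℤ X) :=
  FreeLieAlgebra.lift ℤ (fun s => (AddMonoidAlgebra.single (w s) 1) ⊗ₜ[ℤ] of ℤ s)

/-- The projection onto the degree-`k` component w.r.t. weight `w`. -/
noncomputable def piW (w : X → ℕ) (k : ℕ) :
    FreeLieAlgebra ℤ X →ₗ[ℤ] FreeLieAlgebra ℤ X :=
  (TensorProduct.lid ℤ (FreeLieAlgebra ℤ X)).toLinearMap ∘ₗ
    (LinearMap.rTensor (FreeLieAlgebra ℤ X) (Finsupp.lapply k ∘ₗ (AddMonoidAlgebra.coeffLinearEquiv ℤ).toLinearMap)) ∘ₗ (Phi w).toLinearMap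

lemma piW_apply (w : X → ℕ) (k : ℕ) (y : FreeLieAlgebra ℤ X) :
    piW w k y = (TensorProduct.lid ℤ (FreeLieAlgebra ℤ X))
      ((LinearMap.rTensor (FreeLieAlgebra ℤ X) (Finsupp.lapply k ∘ₗ (AddMonoidAlgebra.coeffLinearEquiv ℤ).toLinearMap)) (Phi w y)) := rfl

lemma Phi_eval (w : X → ℕ) (M : BT X) :
    Phi w (M.eval) = (AddMonoidAlgebra.single (M.wt w) 1) ⊗ₜ[ℤ] M.eval := by
  induction M with
  | leaf s => exact FreeLieAlgebra.lift_of_apply (R := ℤ) (L := GA ⊗[ℤ] FreeLieAlgebra ℤ X) _ s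
  | node u v hu hv =>
    show Phi w ⁅u.eval, v.eval⁆ = _
    rw [LieHom.map_lie, hu, hv, LieAlgebra.ExtendScalars.bracket_tmul]
    rw [AddMonoidAlgebra.single_mul_single, one_mul]
    rfl

lemma piW_eval (w : X → ℕ) (k : ℕ) (M : BT X) :
    piW w k M.eval = if M.wt w = k then M.eval else 0 := by
  rw [piW_apply, Phi_eval]
  simp only [LinearMap.rTensor_tmul, LinearEquiv.coe_coe, TensorProduct.lid_tmul,
    Finsupp.lapply_apply, LinearMap.coe_comp, Function.comp_apply,
    AddMonoidAlgebra.coeffLinearEquiv_apply, AddMonoidAlgebra.coeff_single]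
  rw [Finsupp.single_apply]
  split <;> simp

lemma piW_mem_btSpan {w : X → ℕ} {k : ℕ} {𝓜 : Set (BT X)} {y : FreeLieAlgebra ℤ X}
    (hy : y ∈ btSpan X 𝓜) : piW w k y ∈ btSpan X {M ∈ 𝓜 | M.wt w = k} := by
  induction hy using Submodule.span_induction with
  | mem y hy =>
    obtain ⟨M, hM, rfl⟩ := hy
    rw [piW_eval]
    split
    · exact Submodule.subset_span ⟨M, ⟨hM, by assumption⟩, rfl⟩
    · simp
  | zero => simp
  | add y z _ _ h1 h2 => rw [map_add]; exact add_mem h1 h2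
  | smul c y _ h => rw [map_smul]; exact Submodule.smul_mem _ c h

lemma piW_eq_self_of_mem {w : X → ℕ} {k : ℕ} {𝓜 : Set (BT X)}
    (h𝓜 : ∀ M ∈ 𝓜, M.wt w = k) {y : FreeLieAlgebra ℤ X}
    (hy : y ∈ btSpan X 𝓜) : piW w k y = y := by
  induction hy using Submodule.span_induction with
  | mem y hy => obtain ⟨M, hM, rfl⟩ := hy; rw [piW_eval, if_pos (h𝓜 M hM)]
  | zero => simp
  | add y z _ _ h1 h2 => rw [map_add, h1, h2]
  | smul c y _ h => rw [map_smul, h]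

lemma piW_eq_zero_of_mem {w : X → ℕ} {k : ℕ} {𝓜 : Set (BT X)}
    (h𝓜 : ∀ M ∈ 𝓜, M.wt w ≠ k) {y : FreeLieAlgebra ℤ X}
    (hy : y ∈ btSpan X 𝓜) : piW w k y = 0 := by
  induction hy using Submodule.span_induction with
  | mem y hy => obtain ⟨M, hM, rfl⟩ := hy; rw [piW_eval, if_neg (h𝓜 M hM)]
  | zero => simp
  | add y z _ _ h1 h2 => rw [map_add, h1, h2, add_zero]
  | smul c y _ h => rw [map_smul, h, smul_zero]

/-- Finite decomposition into graded components. -/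
lemma piW_decomp {w : X → ℕ} {𝓜 : Set (BT X)} {y : FreeLieAlgebra ℤ X}
    (hy : y ∈ btSpan X 𝓜) :
    ∃ F : Finset ℕ, ∀ F' : Finset ℕ, F ⊆ F' → y = ∑ k ∈ F', piW w k y := by
  induction hy using Submodule.span_induction with
  | mem y hy =>
    obtain ⟨M, hM, rfl⟩ := hy
    refine ⟨{M.wt w}, fun F' hF' => ?_⟩
    rw [Finset.sum_congr rfl (fun k _ => piW_eval w k M)]
    rw [Finset.sum_ite_eq F' (M.wt w) (fun _ => M.eval)]
    rw [if_pos (hF' (Finset.mem_singleton_self _))]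
  | zero => exact ⟨∅, fun F' _ => by simp⟩
  | add y z _ _ h1 h2 =>
    obtain ⟨F1, h1⟩ := h1; obtain ⟨F2, h2⟩ := h2
    refine ⟨F1 ∪ F2, fun F' hF' => ?_⟩
    simp only [map_add, Finset.sum_add_distrib]
    rw [← h1 F' (Finset.union_subset_iff.1 hF').1, ← h2 F' (Finset.union_subset_iff.1 hF').2]
  | smul c y _ h =>
    obtain ⟨F, h⟩ := h
    refine ⟨F, fun F' hF' => ?_⟩
    simp only [map_smul, ← Finset.smul_sum]
    rw [← h F' hF']

end Grading

noncomputable section Derivations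

variable {X : Type v}

/-- The adjoint double of a Lie ring: pairs `(y, m)` where `m` lives in the adjoint module. -/
def TD (M : Type v) := M × M

namespace TD

variable {M : Type v} [LieRing M]

instance : AddCommGroup (TD M) := inferInstanceAs (AddCommGroup (M × M))

instance : Bracket (TD M) (TD M) :=
  ⟨fun p q => (⁅p.1, q.1⁆, ⁅p.1, q.2⁆ + ⁅p.2, q.1⁆)⟩

lemma bracket_def (p q : TD M) :
    ⁅p, q⁆ = ((⁅p.1, q.1⁆, ⁅p.1, q.2⁆ + ⁅p.2, q.1⁆) : M × M) := rfl

lemma add_def (p q : TD M) : p + q = ((p.1 + q.1, p.2 + q.2) : M × M) := rfl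

instance : LieRing (TD M) where
  add_lie p q r := by
    show ((⁅p.1 + q.1, r.1⁆, ⁅p.1 + q.1, r.2⁆ + ⁅p.2 + q.2, r.1⁆) : M × M)
      = (⁅p.1, r.1⁆ + ⁅q.1, r.1⁆, (⁅p.1, r.2⁆ + ⁅p.2, r.1⁆) + (⁅q.1, r.2⁆ + ⁅q.2, r.1⁆))
    rw [Prod.mk.injEq]
    refine ⟨add_lie _ _ _, ?_⟩
    simp only [add_lie]
    abel
  lie_add p q r := by
    show ((⁅p.1, q.1 + r.1⁆, ⁅p.1, q.2 + r.2⁆ + ⁅p.2, q.1 + r.1⁆) : M × M)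
      = (⁅p.1, q.1⁆ + ⁅p.1, r.1⁆, (⁅p.1, q.2⁆ + ⁅p.2, q.1⁆) + (⁅p.1, r.2⁆ + ⁅p.2, r.1⁆))
    rw [Prod.mk.injEq]
    refine ⟨lie_add _ _ _, ?_⟩
    simp only [lie_add]
    abel
  lie_self p := by
    show ((⁅p.1, p.1⁆, ⁅p.1, p.2⁆ + ⁅p.2, p.1⁆) : M × M) = (0, 0)
    rw [Prod.mk.injEq]
    refine ⟨lie_self _, ?_⟩
    rw [← lie_skew p.1 p.2]
    abel
  leibniz_lie p q r := by
    show ((⁅p.1, ⁅q.1, r.1⁆⁆, ⁅p.1, ⁅q.1, r.2⁆ + ⁅q.2, r.1⁆⁆ + ⁅p.2, ⁅q.1, r.1⁆⁆) : M × M)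
      = (⁅⁅p.1, q.1⁆, r.1⁆ + ⁅q.1, ⁅p.1, r.1⁆⁆,
          (⁅⁅p.1, q.1⁆, r.2⁆ + ⁅⁅p.1, q.2⁆ + ⁅p.2, q.1⁆, r.1⁆)
            + (⁅q.1, ⁅p.1, r.2⁆ + ⁅p.2, r.1⁆⁆ + ⁅q.2, ⁅p.1, r.1⁆⁆))
    rw [Prod.mk.injEq]
    refine ⟨leibniz_lie _ _ _, ?_⟩
    simp only [lie_add, add_lie, lie_lie]
    abel

/-- First projection as a Lie algebra morphism. -/
def fstHom (M : Type v) [LieRing M] : TD M →ₗ⁅ℤ⁆ M where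
  toFun p := p.1
  map_add' p q := rfl
  map_smul' c p := rfl
  map_lie' := rfl

/-- `y ↦ (y, ⁅z, y⁆)` as a Lie algebra morphism. -/
def adPair (z : M) : M →ₗ⁅ℤ⁆ TD M where
  toFun y := ((y, ⁅z, y⁆) : M × M)
  map_add' p q := by show ((_,_) : M × M) = _; rw [lie_add]; rfl
  map_smul' c p := by show ((_,_) : M × M) = _; rw [lie_smul]; rfl
  map_lie' {p q} := by
    show ((⁅p, q⁆, ⁅z, ⁅p, q⁆⁆) : M × M) = ((⁅p, q⁆, ⁅p, ⁅z, q⁆⁆ + ⁅⁅z, p⁆, q⁆) : M × M)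
    rw [Prod.mk.injEq]
    refine ⟨rfl, ?_⟩
    rw [leibniz_lie z p q]
    abel

/-- Functoriality of `TD`. -/
def mapTD {N : Type v} [LieRing N] (f : M →ₗ⁅ℤ⁆ N) : TD M →ₗ⁅ℤ⁆ TD N where
  toFun p := ((f p.1, f p.2) : N × N)
  map_add' p q := by
    show ((f (p.1 + q.1), f (p.2 + q.2)) : N × N) = ((f p.1 + f q.1, f p.2 + f q.2) : N × N)
    rw [Prod.mk.injEq]
    exact ⟨f.map_add _ _, f.map_add _ _⟩
  map_smul' c p := by
    show ((f (c • p.1), f (c • p.2)) : N × N) = c • ((f p.1, f p.2) : N × N)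
    show _ = ((c • f p.1, c • f p.2) : N × N)
    rw [Prod.mk.injEq]
    exact ⟨f.map_smul _ _, f.map_smul _ _⟩
  map_lie' {p q} := by
    show ((f ⁅p.1, q.1⁆, f (⁅p.1, q.2⁆ + ⁅p.2, q.1⁆)) : N × N) = _
    show _ = ((⁅f p.1, f q.1⁆, ⁅f p.1, f q.2⁆ + ⁅f p.2, f q.1⁆) : N × N)
    rw [Prod.mk.injEq]
    refine ⟨LieHom.map_lie f _ _, ?_⟩
    exact (map_add f _ _).trans (by rw [LieHom.map_lie, LieHom.map_lie])

end TD

/-- The canonical derivation of a free Lie algebra attached to values on generators: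
first build the Lie morphism into the adjoint double. -/
noncomputable def thetaD (δ : X → FreeLieAlgebra ℤ X) :
    FreeLieAlgebra ℤ X →ₗ⁅ℤ⁆ TD (FreeLieAlgebra ℤ X) :=
  FreeLieAlgebra.lift ℤ (fun s => ((of ℤ s, δ s) : FreeLieAlgebra ℤ X × FreeLieAlgebra ℤ X))

lemma thetaD_fst (δ : X → FreeLieAlgebra ℤ X) (u : FreeLieAlgebra ℤ X) :
    (thetaD δ u).1 = u := by
  have : (TD.fstHom (FreeLieAlgebra ℤ X)).comp (thetaD δ) = LieHom.id := by
    apply FreeLieAlgebra.hom_ext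
    intro s
    simp only [LieHom.comp_apply, thetaD, FreeLieAlgebra.lift_of_apply]
    exact congrArg (TD.fstHom (FreeLieAlgebra ℤ X)) (FreeLieAlgebra.lift_of_apply (R := ℤ)
      (L := TD (FreeLieAlgebra ℤ X)) _ s)
  exact LieHom.congr_fun this u

/-- The derivation of the free Lie algebra with given values on generators. -/
noncomputable def derOf (δ : X → FreeLieAlgebra ℤ X) :
    FreeLieAlgebra ℤ X →ₗ[ℤ] FreeLieAlgebra ℤ X :=
  (LinearMap.snd ℤ (FreeLieAlgebra ℤ X) (FreeLieAlgebra ℤ X)) ∘ₗ (thetaD δ).toLinearMap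

lemma thetaD_apply (δ : X → FreeLieAlgebra ℤ X) (u : FreeLieAlgebra ℤ X) :
    thetaD δ u = ((u, derOf δ u) : FreeLieAlgebra ℤ X × FreeLieAlgebra ℤ X) :=
  Prod.ext (thetaD_fst δ u) rfl

lemma derOf_of (δ : X → FreeLieAlgebra ℤ X) (s : X) : derOf δ (of ℤ s) = δ s := by
  have h : thetaD δ (of ℤ s)
      = ((of ℤ s, δ s) : FreeLieAlgebra ℤ X × FreeLieAlgebra ℤ X) :=
    FreeLieAlgebra.lift_of_apply _ s
  show (thetaD δ (of ℤ s)).2 = δ s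
  rw [h]

lemma derOf_lie (δ : X → FreeLieAlgebra ℤ X) (u v : FreeLieAlgebra ℤ X) :
    derOf δ ⁅u, v⁆ = ⁅u, derOf δ v⁆ + ⁅derOf δ u, v⁆ := by
  have h := (thetaD δ).map_lie (x := u) (y := v)
  rw [thetaD_apply, thetaD_apply, thetaD_apply] at h
  exact congrArg Prod.snd h

end Derivations

noncomputable section Elim

variable {X : Type v}

/-- Generators for the Lazard elimination kernel. -/
abbrev Kgen (x : X) : Type v := ℕ × {b : X // b ≠ x}

/-- The free Lie algebra on the elimination generators. -/
abbrev KK (x : X) : Type v := FreeLieAlgebra ℤ (Kgen x)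

variable (x : X)

/-- The shift derivation. -/
noncomputable def dK : KK x →ₗ[ℤ] KK x :=
  derOf (fun y => of ℤ ((y.1 + 1, y.2) : Kgen x))

/-- The lowering derivation. -/
noncomputable def eK : KK x →ₗ[ℤ] KK x :=
  derOf (fun y => (y.1 : ℤ) • of ℤ ((y.1 - 1, y.2) : Kgen x))

lemma dK_of (y : Kgen x) : dK x (of ℤ y) = of ℤ ((y.1 + 1, y.2) : Kgen x) := derOf_of _ y

lemma eK_of (y : Kgen x) : eK x (of ℤ y) = (y.1 : ℤ) • of ℤ ((y.1 - 1, y.2) : Kgen x) :=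
  derOf_of _ y

lemma dK_lie (u v : KK x) : dK x ⁅u, v⁆ = ⁅u, dK x v⁆ + ⁅dK x u, v⁆ := derOf_lie _ u v

lemma eK_lie (u v : KK x) : eK x ⁅u, v⁆ = ⁅u, eK x v⁆ + ⁅eK x u, v⁆ := derOf_lie _ u v

/-- The semidirect product `ℤ ⋉ K`, where `1 ∈ ℤ` acts via the shift derivation. -/
def HH (x : X) : Type v := ℤ × KK x

namespace HH

instance : AddCommGroup (HH x) := inferInstanceAs (AddCommGroup (ℤ × KK x))

instance : Bracket (HH x) (HH x) :=
  ⟨fun p q => ((0, p.1 • dK x q.2 - q.1 • dK x p.2 + ⁅p.2, q.2⁆) : ℤ × KK x)⟩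

lemma bracket_def (p q : HH x) :
    ⁅p, q⁆ = ((0, p.1 • dK x q.2 - q.1 • dK x p.2 + ⁅p.2, q.2⁆) : ℤ × KK x) := rfl

instance : LieRing (HH x) where
  add_lie p q r := by
    show ((0, (p.1 + q.1) • dK x r.2 - r.1 • dK x (p.2 + q.2) + ⁅p.2 + q.2, r.2⁆) : ℤ × KK x)
      = ((0 + 0, (p.1 • dK x r.2 - r.1 • dK x p.2 + ⁅p.2, r.2⁆)
          + (q.1 • dK x r.2 - r.1 • dK x q.2 + ⁅q.2, r.2⁆)) : ℤ × KK x)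
    rw [Prod.mk.injEq]
    refine ⟨by ring, ?_⟩
    rw [add_smul, map_add, smul_add, add_lie]
    abel
  lie_add p q r := by
    show ((0, p.1 • dK x (q.2 + r.2) - (q.1 + r.1) • dK x p.2 + ⁅p.2, q.2 + r.2⁆) : ℤ × KK x)
      = ((0 + 0, (p.1 • dK x q.2 - q.1 • dK x p.2 + ⁅p.2, q.2⁆)
          + (p.1 • dK x r.2 - r.1 • dK x p.2 + ⁅p.2, r.2⁆)) : ℤ × KK x)
    rw [Prod.mk.injEq]
    refine ⟨by ring, ?_⟩
    rw [add_smul, map_add, smul_add, lie_add]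
    abel
  lie_self p := by
    show ((0, p.1 • dK x p.2 - p.1 • dK x p.2 + ⁅p.2, p.2⁆) : ℤ × KK x) = (0, 0)
    rw [Prod.mk.injEq]
    exact ⟨rfl, by rw [lie_self]; abel⟩
  leibniz_lie p q r := by
    show ((0, p.1 • dK x (q.1 • dK x r.2 - r.1 • dK x q.2 + ⁅q.2, r.2⁆) - (0:ℤ) • dK x p.2
            + ⁅p.2, q.1 • dK x r.2 - r.1 • dK x q.2 + ⁅q.2, r.2⁆⁆) : ℤ × KK x)
      = ((0 + 0,
          ((0:ℤ) • dK x r.2 - r.1 • dK x (p.1 • dK x q.2 - q.1 • dK x p.2 + ⁅p.2, q.2⁆)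
            + ⁅p.1 • dK x q.2 - q.1 • dK x p.2 + ⁅p.2, q.2⁆, r.2⁆)
          + (q.1 • dK x (p.1 • dK x r.2 - r.1 • dK x p.2 + ⁅p.2, r.2⁆) - (0:ℤ) • dK x q.2
            + ⁅q.2, p.1 • dK x r.2 - r.1 • dK x p.2 + ⁅p.2, r.2⁆⁆)) : ℤ × KK x)
    rw [Prod.mk.injEq]
    refine ⟨by ring, ?_⟩
    simp only [map_add, map_sub, map_smul, dK_lie, lie_add, add_lie, lie_sub, sub_lie,
      lie_smul, smul_lie, smul_sub, smul_add, smul_neg, neg_lie, lie_neg, zero_smul, lie_lie]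
    rw [← lie_skew q.2 ((dK x) p.2)]
    module

end HH

open Classical in
/-- The elimination morphism into the semidirect product. -/
noncomputable def fE : FreeLieAlgebra ℤ X →ₗ⁅ℤ⁆ HH x :=
  FreeLieAlgebra.lift ℤ (fun s =>
    if h : s = x then (((1 : ℤ), 0) : ℤ × KK x) else ((0, of ℤ ((0, ⟨s, h⟩) : Kgen x)) : ℤ × KK x))

lemma fE_of_x : fE x (of ℤ x) = (((1 : ℤ), 0) : ℤ × KK x) := by
  exact (FreeLieAlgebra.lift_of_apply (R := ℤ) (L := HH x) _ x).trans (dif_pos rfl)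

lemma fE_of_ne {s : X} (h : s ≠ x) :
    fE x (of ℤ s) = ((0, of ℤ ((0, ⟨s, h⟩) : Kgen x)) : ℤ × KK x) := by
  exact (FreeLieAlgebra.lift_of_apply (R := ℤ) (L := HH x) _ s).trans (dif_neg h)

/-- The adjoint action of `of x`. -/
noncomputable def adx : Module.End ℤ (FreeLieAlgebra ℤ X) :=
  LieAlgebra.ad ℤ (FreeLieAlgebra ℤ X) (of ℤ x)

/-- The section from the elimination kernel back to the free Lie algebra. -/
noncomputable def gammaE : KK x →ₗ⁅ℤ⁆ FreeLieAlgebra ℤ X :=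
  FreeLieAlgebra.lift ℤ (fun y : Kgen x => ((adx x) ^ y.1) (of ℤ y.2.1))

lemma gammaE_of (y : Kgen x) : gammaE x (of ℤ y) = ((adx x) ^ y.1) (of ℤ y.2.1) :=
  FreeLieAlgebra.lift_of_apply _ y

/-- Key intertwining identity: `γ ∘ d = ad (of x) ∘ γ`. -/
lemma gammaE_dK (u : KK x) : gammaE x (dK x u) = ⁅of ℤ x, gammaE x u⁆ := by
  have h : (TD.mapTD (gammaE x)).comp (thetaD (fun y => of ℤ ((y.1 + 1, y.2) : Kgen x)))
      = (TD.adPair (of ℤ x)).comp (gammaE x) := by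
    apply FreeLieAlgebra.hom_ext
    intro y
    simp only [LieHom.comp_apply, thetaD]
    refine (congrArg (TD.mapTD (gammaE x))
      (FreeLieAlgebra.lift_of_apply (R := ℤ) (L := TD (KK x)) _ y)).trans ?_
    show ((gammaE x (of ℤ y), gammaE x (of ℤ ((y.1 + 1, y.2) : Kgen x)))
        : FreeLieAlgebra ℤ X × FreeLieAlgebra ℤ X)
      = ((gammaE x (of ℤ y), ⁅of ℤ x, gammaE x (of ℤ y)⁆)
        : FreeLieAlgebra ℤ X × FreeLieAlgebra ℤ X)
    rw [Prod.mk.injEq]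
    refine ⟨rfl, ?_⟩
    rw [gammaE_of, gammaE_of]
    show ((adx x) ^ (y.1 + 1)) (of ℤ y.2.1) = (adx x) (((adx x) ^ y.1) (of ℤ y.2.1))
    rw [pow_succ']
    rfl
  have h2 := LieHom.congr_fun h u
  simp only [LieHom.comp_apply] at h2
  have h3 := congrArg Prod.snd h2
  exact h3

/-- The retraction `HH x → L(X)`. -/
noncomputable def gE : HH x →ₗ⁅ℤ⁆ FreeLieAlgebra ℤ X where
  toFun p := p.1 • of ℤ x + gammaE x p.2
  map_add' p q := by
    show (p.1 + q.1) • of ℤ x + gammaE x (p.2 + q.2) = _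
    rw [add_smul, map_add]
    abel
  map_smul' c p := by
    show (c • p.1) • of ℤ x + gammaE x (c • p.2) = c • (p.1 • of ℤ x + gammaE x p.2)
    rw [map_smul, smul_add, smul_smul, smul_eq_mul, mul_smul]
  map_lie' {p q} := by
    show (0 : ℤ) • of ℤ x + gammaE x (p.1 • dK x q.2 - q.1 • dK x p.2 + ⁅p.2, q.2⁆)
      = ⁅p.1 • of ℤ x + gammaE x p.2, q.1 • of ℤ x + gammaE x q.2⁆
    rw [zero_smul, zero_add, map_add, map_sub, map_smul,
      map_smul, LieHom.map_lie, gammaE_dK, gammaE_dK]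
    simp only [lie_add, add_lie, lie_smul, smul_lie, lie_self, smul_zero, zero_add,
      smul_smul]
    rw [← lie_skew (gammaE x p.2) (of ℤ x)]
    module

lemma gE_fE : ∀ u, gE x (fE x u) = u := by
  intro u
  have h : (gE x).comp (fE x) = LieHom.id := by
    apply FreeLieAlgebra.hom_ext
    intro s
    show gE x (fE x (of ℤ s)) = of ℤ s
    by_cases hs : s = x
    · subst hs
      rw [fE_of_x]
      show (1 : ℤ) • of ℤ s + gammaE s 0 = of ℤ s
      rw [one_smul, map_zero, add_zero]
    · rw [fE_of_ne x hs]
      show (0 : ℤ) • of ℤ x + gammaE x (of ℤ ((0, ⟨s, hs⟩) : Kgen x)) = of ℤ s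
      rw [zero_smul, zero_add, gammaE_of]
      rfl
  exact LieHom.congr_fun h u

lemma fE_injective : Function.Injective (fE x) := by
  intro u v h
  have := congrArg (gE x) h
  rwa [gE_fE, gE_fE] at this

end Elim

noncomputable section MonomialAnalysis

variable {X : Type v}

open Classical in
/-- Indicator weight of a letter. -/
def indic (x : X) : X → ℕ := fun s => if s = x then 1 else 0

open Classical in
/-- Complementary indicator weight. -/
def coindic (x : X) : X → ℕ := fun s => if s = x then 0 else 1

lemma wt_indic_add_coindic (x : X) (M : BT X) :
    M.wt (indic x) + M.wt (coindic x) = M.len := by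
  induction M with
  | leaf s => simp only [BT.wt, BT.len, indic, coindic]; split <;> simp
  | node u v hu hv => simp only [BT.wt, BT.len] at *; omega

/-- The list of letters of a tree. -/
def BT.lettersList : BT X → List X
  | BT.leaf s => [s]
  | BT.node u v => u.lettersList ++ v.lettersList

lemma BT.not_mem_letters_of_wt_indic_zero {x : X} {M : BT X}
    (h : M.wt (indic x) = 0) : x ∉ M.lettersList := by
  induction M with
  | leaf s =>
    simp only [BT.wt, indic] at h
    simp only [BT.lettersList, List.mem_singleton]
    intro hx
    rw [hx] at h
    simp at h
  | node u v hu hv =>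
    simp only [BT.wt] at h
    simp only [BT.lettersList, List.mem_append]
    rintro (hc | hc)
    · exact hu (by omega) hc
    · exact hv (by omega) hc

variable (x : X)

/-- Weight function on elimination generators given by the shift degree. -/
def wk : Kgen x → ℕ := fun y => y.1

lemma dK_eval_mem (N : BT (Kgen x)) :
    dK x N.eval ∈ btSpan (Kgen x) {N' | N'.len = N.len ∧ N'.wt (wk x) = N.wt (wk x) + 1} := by
  induction N with
  | leaf y =>
    rw [BT.eval, dK_of]
    refine Submodule.subset_span ⟨BT.leaf ((y.1 + 1, y.2) : Kgen x), ⟨rfl, ?_⟩, rfl⟩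
    simp [BT.wt, wk]
  | node u v hu hv =>
    rw [BT.eval, dK_lie]
    refine Submodule.add_mem _ ?_ ?_
    · have h := lie_btSpan_mem (𝓜 := {u}) (Submodule.subset_span ⟨u, rfl, rfl⟩) hv
      refine Submodule.span_mono (Set.image_mono ?_) h
      rintro _ ⟨u', rfl, v', hv', rfl⟩
      obtain ⟨ha, hb⟩ := hv'
      refine ⟨?_, ?_⟩ <;> simp only [Set.mem_setOf_eq, BT.len, BT.wt] at ha hb ⊢ <;> omega
    · have h := lie_btSpan_mem (𝓝 := {v}) hu (Submodule.subset_span ⟨v, rfl, rfl⟩)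
      refine Submodule.span_mono (Set.image_mono ?_) h
      rintro _ ⟨u', hu', v', rfl, rfl⟩
      obtain ⟨ha, hb⟩ := hu'
      refine ⟨?_, ?_⟩ <;> simp only [Set.mem_setOf_eq, BT.len, BT.wt] at ha hb ⊢ <;> omega

lemma eK_eval_mem (N : BT (Kgen x)) :
    eK x N.eval ∈ btSpan (Kgen x) {N' | N'.len = N.len ∧ N'.wt (wk x) + 1 = N.wt (wk x)} := by
  induction N with
  | leaf y =>
    rw [BT.eval, eK_of]
    rcases y with ⟨k, b⟩
    cases k with
    | zero => simp
    | succ k =>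
      refine Submodule.smul_mem _ _ (Submodule.subset_span ⟨BT.leaf ((k + 1 - 1, b) : Kgen x), ⟨rfl, ?_⟩, rfl⟩)
      simp [BT.wt, wk]
  | node u v hu hv =>
    rw [BT.eval, eK_lie]
    refine Submodule.add_mem _ ?_ ?_
    · have h := lie_btSpan_mem (𝓜 := {u}) (Submodule.subset_span ⟨u, rfl, rfl⟩) hv
      refine Submodule.span_mono (Set.image_mono ?_) h
      rintro _ ⟨u', rfl, v', hv', rfl⟩
      obtain ⟨ha, hb⟩ := hv'
      refine ⟨?_, ?_⟩ <;> simp only [Set.mem_setOf_eq, BT.len, BT.wt] at ha hb ⊢ <;> omega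
    · have h := lie_btSpan_mem (𝓝 := {v}) hu (Submodule.subset_span ⟨v, rfl, rfl⟩)
      refine Submodule.span_mono (Set.image_mono ?_) h
      rintro _ ⟨u', hu', v', rfl, rfl⟩
      obtain ⟨ha, hb⟩ := hu'
      refine ⟨?_, ?_⟩ <;> simp only [Set.mem_setOf_eq, BT.len, BT.wt] at ha hb ⊢ <;> omega

lemma dK_btSpan {𝓝 : Set (BT (Kgen x))} {u : KK x} (hu : u ∈ btSpan (Kgen x) 𝓝) :
    dK x u ∈ btSpan (Kgen x)
      {N' | ∃ N ∈ 𝓝, N'.len = N.len ∧ N'.wt (wk x) = N.wt (wk x) + 1} := by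
  induction hu using Submodule.span_induction with
  | mem y hy =>
    obtain ⟨N, hN, rfl⟩ := hy
    refine Submodule.span_mono (Set.image_mono ?_) (dK_eval_mem x N)
    rintro N' ⟨h1, h2⟩
    exact ⟨N, hN, h1, h2⟩
  | zero => simp
  | add y z _ _ h1 h2 => rw [map_add]; exact Submodule.add_mem _ h1 h2
  | smul c y _ h => rw [map_smul]; exact Submodule.smul_mem _ c h

lemma eK_btSpan {𝓝 : Set (BT (Kgen x))} {u : KK x} (hu : u ∈ btSpan (Kgen x) 𝓝) :
    eK x u ∈ btSpan (Kgen x)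
      {N' | ∃ N ∈ 𝓝, N'.len = N.len ∧ N'.wt (wk x) + 1 = N.wt (wk x)} := by
  induction hu using Submodule.span_induction with
  | mem y hy =>
    obtain ⟨N, hN, rfl⟩ := hy
    refine Submodule.span_mono (Set.image_mono ?_) (eK_eval_mem x N)
    rintro N' ⟨h1, h2⟩
    exact ⟨N, hN, h1, h2⟩
  | zero => simp
  | add y z _ _ h1 h2 => rw [map_add]; exact Submodule.add_mem _ h1 h2
  | smul c y _ h => rw [map_smul]; exact Submodule.smul_mem _ c h

/-- The `sl₂`-type commutation relation on monomials. -/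
lemma eK_dK_sub_dK_eK (N : BT (Kgen x)) :
    eK x (dK x N.eval) - dK x (eK x N.eval) = (N.len : ℤ) • N.eval := by
  induction N with
  | leaf y =>
    rcases y with ⟨k, b⟩
    cases k with
    | zero =>
      have h1 : dK x (of ℤ ((0, b) : Kgen x)) = of ℤ ((1, b) : Kgen x) := dK_of x _
      have h2 : eK x (of ℤ ((1, b) : Kgen x)) = ((1:ℕ) : ℤ) • of ℤ ((0, b) : Kgen x) :=
        eK_of x _
      have h3 : eK x (of ℤ ((0, b) : Kgen x)) = ((0:ℕ) : ℤ) • of ℤ ((0, b) : Kgen x) :=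
        eK_of x _
      rw [BT.eval, h1, h2, h3]
      simp [BT.len, BT.wt]
    | succ k =>
      have h1 : dK x (of ℤ ((k + 1, b) : Kgen x)) = of ℤ ((k + 2, b) : Kgen x) := dK_of x _
      have h2 : eK x (of ℤ ((k + 2, b) : Kgen x)) = ((k + 2 : ℕ) : ℤ) • of ℤ ((k + 1, b) : Kgen x) :=
        eK_of x _
      have h3 : eK x (of ℤ ((k + 1, b) : Kgen x)) = ((k + 1 : ℕ) : ℤ) • of ℤ ((k, b) : Kgen x) :=
        eK_of x _
      have h4 : dK x (((k + 1 : ℕ) : ℤ) • of ℤ ((k, b) : Kgen x))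
          = ((k + 1 : ℕ) : ℤ) • of ℤ ((k + 1, b) : Kgen x) := by
        rw [map_smul, dK_of]
      rw [BT.eval, h1, h2, h3, h4, ← sub_smul]
      have h5 : ((k + 2 : ℕ) : ℤ) - ((k + 1 : ℕ) : ℤ) = ((BT.leaf ((k+1, b) : Kgen x)).len : ℤ) := by
        show _ = ((1:ℕ) : ℤ)
        push_cast; ring
      rw [h5]
  | node u v hu hv =>
    have hu' : eK x (dK x u.eval) = dK x (eK x u.eval) + (u.len : ℤ) • u.eval := by
      rw [← hu]; abel
    have hv' : eK x (dK x v.eval) = dK x (eK x v.eval) + (v.len : ℤ) • v.eval := by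
      rw [← hv]; abel
    rw [BT.eval]
    simp only [dK_lie, eK_lie, map_add, hu', hv', lie_add, add_lie, lie_smul, smul_lie]
    have hlen : ((BT.node u v).len : ℤ) = (u.len : ℤ) + (v.len : ℤ) := by
      show ((u.len + v.len : ℕ) : ℤ) = _
      push_cast; ring
    rw [hlen, add_smul]
    abel

/-- Analysis of the elimination morphism on bracket monomials. -/
lemma fE_eval (M : BT X) :
    ((fE x M.eval).1 = 0 ∨ M = BT.leaf x) ∧
      (fE x M.eval).2 ∈ btSpan (Kgen x) {N | N.len = M.wt (coindic x)} := by
  induction M with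
  | leaf s =>
    by_cases hs : s = x
    · subst hs
      rw [BT.eval, fE_of_x]
      exact ⟨Or.inr rfl, Submodule.zero_mem _⟩
    · rw [BT.eval, fE_of_ne x hs]
      refine ⟨Or.inl rfl, Submodule.subset_span ⟨BT.leaf ((0, ⟨s, hs⟩) : Kgen x), ?_, rfl⟩⟩
      simp [BT.wt, BT.len, coindic, hs]
  | node M₁ M₂ h₁ h₂ =>
    rw [BT.eval, LieHom.map_lie]
    rw [HH.bracket_def]
    constructor
    · exact Or.inl rfl
    · show (fE x M₁.eval).1 • dK x (fE x M₂.eval).2 - (fE x M₂.eval).1 • dK x (fE x M₁.eval).2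
          + ⁅(fE x M₁.eval).2, (fE x M₂.eval).2⁆ ∈ _
      have hlen : (BT.node M₁ M₂).wt (coindic x) = M₁.wt (coindic x) + M₂.wt (coindic x) := rfl
      have hbr : ⁅(fE x M₁.eval).2, (fE x M₂.eval).2⁆
          ∈ btSpan (Kgen x) {N | N.len = (BT.node M₁ M₂).wt (coindic x)} := by
        have h := lie_btSpan_mem h₁.2 h₂.2
        refine Submodule.span_mono (Set.image_mono ?_) h
        rintro _ ⟨u', hu', v', hv', rfl⟩
        simp only [Set.mem_setOf_eq, BT.len, BT.wt] at *
        omega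
      have hterm1 : (fE x M₁.eval).1 • dK x (fE x M₂.eval).2
          ∈ btSpan (Kgen x) {N | N.len = (BT.node M₁ M₂).wt (coindic x)} := by
        rcases h₁.1 with hc | hleaf
        · rw [hc, zero_smul]; exact Submodule.zero_mem _
        · have hw1 : M₁.wt (coindic x) = 0 := by
            subst hleaf; simp [BT.wt, coindic]
          refine Submodule.smul_mem _ _ ?_
          have h := dK_btSpan x h₂.2
          refine Submodule.span_mono (Set.image_mono ?_) h
          rintro N' ⟨N, hN, hl, _⟩
          simp only [Set.mem_setOf_eq] at *
          omega
      have hterm2 : (fE x M₂.eval).1 • dK x (fE x M₁.eval).2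
          ∈ btSpan (Kgen x) {N | N.len = (BT.node M₁ M₂).wt (coindic x)} := by
        rcases h₂.1 with hc | hleaf
        · rw [hc, zero_smul]; exact Submodule.zero_mem _
        · have hw2 : M₂.wt (coindic x) = 0 := by
            subst hleaf; simp [BT.wt, coindic]
          refine Submodule.smul_mem _ _ ?_
          have h := dK_btSpan x h₁.2
          refine Submodule.span_mono (Set.image_mono ?_) h
          rintro N' ⟨N, hN, hl, _⟩
          simp only [Set.mem_setOf_eq] at *
          omega
      exact Submodule.add_mem _ (Submodule.sub_mem _ hterm1 hterm2) hbr

end MonomialAnalysis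

noncomputable section TorsionFree

variable {X : Type v}

lemma btSpan_empty : btSpan X (∅ : Set (BT X)) = ⊥ := by
  show Submodule.span ℤ (BT.eval '' (∅ : Set (BT X))) = ⊥
  rw [Set.image_empty, Submodule.span_empty]

lemma BT.lettersList_ne_nil (M : BT X) : M.lettersList ≠ [] := by
  induction M with
  | leaf s => simp [BT.lettersList]
  | node u v hu hv => simp [BT.lettersList, hu]

lemma BT.eq_leaf_of_len_eq_one {M : BT X} (h : M.len = 1) : ∃ s, M = BT.leaf s := by
  cases M with
  | leaf s => exact ⟨s, rfl⟩
  | node u v =>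
    exfalso
    have h1 := u.one_le_len
    have h2 := v.one_le_len
    have : (BT.node u v).len = u.len + v.len := rfl
    omega

open Classical in
/-- The coefficient of `of x` extracted via `fE`. -/
lemma fE_fst_of (x s : X) :
    (fE x (of ℤ s)).1 = (if s = x then (1 : ℤ) else 0) := by
  by_cases hs : s = x
  · subst hs; rw [fE_of_x, if_pos rfl]
  · rw [fE_of_ne x hs, if_neg hs]

/-- Degree-one torsion elements vanish. -/
lemma torsion_len_one {z : FreeLieAlgebra ℤ X}
    (hz : z ∈ btSpan X {M | M.len = 1}) {n : ℤ} (hn : n ≠ 0) (h : n • z = 0) : z = 0 := by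
  classical
  obtain ⟨c, hsupp, hsum⟩ := Submodule.mem_span_set.mp hz
  have hletter : ∀ v : c.support, ∃ s : X, (v : FreeLieAlgebra ℤ X) = of ℤ s := by
    rintro ⟨v, hv⟩
    obtain ⟨M, hM, rfl⟩ := hsupp hv
    obtain ⟨s, rfl⟩ := BT.eq_leaf_of_len_eq_one hM
    exact ⟨s, rfl⟩
  choose sl hsl using hletter
  have key : ∀ v₀ ∈ c.support, c v₀ = 0 := by
    intro v₀ hv₀
    set s₀ : X := sl ⟨v₀, hv₀⟩ with hs₀def
    set χ : FreeLieAlgebra ℤ X →ₗ[ℤ] ℤ :=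
      (LinearMap.fst ℤ ℤ (KK s₀)) ∘ₗ (fE s₀).toLinearMap with hχ
    have hχv : ∀ v (hv : v ∈ c.support), χ v = if v = v₀ then 1 else 0 := by
      intro v hv
      have h1 : χ v = χ (of ℤ (sl ⟨v, hv⟩)) := congrArg χ (hsl ⟨v, hv⟩)
      have h2 : χ (of ℤ (sl ⟨v, hv⟩)) = (fE s₀ (of ℤ (sl ⟨v, hv⟩))).1 := rfl
      rw [h1, h2, fE_fst_of]
      by_cases hss : sl ⟨v, hv⟩ = s₀
      · rw [if_pos hss, if_pos]
        have hv' : v = of ℤ (sl ⟨v, hv⟩) := hsl ⟨v, hv⟩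
        have hv₀' : v₀ = of ℤ s₀ := hsl ⟨v₀, hv₀⟩
        rw [hv', hv₀', hss]
      · rw [if_neg hss, if_neg]
        intro hvv
        apply hss
        have : (⟨v, hv⟩ : c.support) = ⟨v₀, hv₀⟩ := Subtype.ext hvv
        rw [this]
    have hz0 : n • χ z = 0 := by rw [← map_smul, h, map_zero]
    have hχz : χ z = c v₀ := by
      rw [← hsum, map_finsuppSum]
      rw [Finsupp.sum_congr (g2 := fun v k => if v = v₀ then k else 0) ?_]
      · rw [Finsupp.sum_ite_eq' c v₀ (fun _ k => k), if_pos hv₀]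
      · intro v hv
        rw [map_smul, hχv v hv]
        by_cases hvv : v = v₀ <;> simp [hvv]
    rw [hχz] at hz0
    rcases mul_eq_zero.mp (by rwa [smul_eq_mul] at hz0) with h' | h'
    · exact absurd h' hn
    · exact h'
  rw [← hsum, Finsupp.sum]
  apply Finset.sum_eq_zero
  intro v hv
  rw [key v hv, zero_smul]

/-- The elimination step: positive `x`-degree torsion components vanish,
assuming torsion-freeness in lower degrees. -/
lemma claimE (x : X) (k m : ℕ) (hk : 2 ≤ k) (hm : 1 ≤ m)
    (IH : ∀ k', k' < k → ∀ (u : KK x), u ∈ btSpan (Kgen x) {N | N.len = k'} →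
      ∀ n : ℤ, n ≠ 0 → n • u = 0 → u = 0)
    (z : FreeLieAlgebra ℤ X) (hz : z ∈ btSpan X {M | M.len = k ∧ M.wt (indic x) = m})
    (n : ℤ) (hn : n ≠ 0) (hnz : n • z = 0) : z = 0 := by
  have hPgen : ∀ y ∈ btSpan X {M | M.len = k ∧ M.wt (indic x) = m},
      (fE x y).1 = 0 ∧ (fE x y).2 ∈ btSpan (Kgen x) {N | N.len = k - m} := by
    intro y₀ hy₀
    induction hy₀ using Submodule.span_induction with
    | mem y hy =>
      obtain ⟨M, hM, rfl⟩ := hy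
      obtain ⟨hMl, hMw⟩ := hM
      obtain ⟨hfst, hsnd⟩ := fE_eval x M
      constructor
      · rcases hfst with h0 | hleaf
        · exact h0
        · exfalso
          have : M.len = 1 := by rw [hleaf]; rfl
          omega
      · have hco : M.wt (coindic x) = k - m := by
          have := wt_indic_add_coindic x M
          omega
        refine Submodule.span_mono (Set.image_mono ?_) hsnd
        intro N hN
        have hN' : N.len = M.wt (coindic x) := hN
        show N.len = k - m
        omega
    | zero =>
      constructor
      · rw [map_zero]; rfl
      · rw [map_zero]; exact Submodule.zero_mem _
    | add y z' _ _ h1 h2 =>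
      constructor
      · rw [map_add]
        show (fE x y).1 + (fE x z').1 = 0
        rw [h1.1, h2.1, add_zero]
      · rw [map_add]
        show (fE x y).2 + (fE x z').2 ∈ _
        exact Submodule.add_mem _ h1.2 h2.2
    | smul c y _ h1 =>
      constructor
      · rw [map_smul]
        show c • (fE x y).1 = 0
        rw [h1.1, smul_zero]
      · rw [map_smul]
        show c • (fE x y).2 ∈ _
        exact Submodule.smul_mem _ c h1.2
  have hP := hPgen z hz
  have hκtor : n • (fE x z).2 = 0 := by
    have h0 : fE x (n • z) = 0 := by rw [hnz, map_zero]
    have h2 : (fE x (n • z)).2 = 0 := by rw [h0]; rfl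
    rw [map_smul] at h2
    exact h2
  have hκ : (fE x z).2 = 0 := IH (k - m) (by omega) _ hP.2 n hn hκtor
  have hfz : fE x z = 0 := by
    have hpair : fE x z = (((fE x z).1, (fE x z).2) : ℤ × KK x) := rfl
    rw [hpair, hP.1, hκ]
    rfl
  apply fE_injective x
  rw [hfz, map_zero]

/-- Torsion-freeness of free Lie rings, degree by degree. -/
theorem torsionfree_deg (k : ℕ) :
    ∀ (X : Type v) (z : FreeLieAlgebra ℤ X), z ∈ btSpan X {M | M.len = k} →
      ∀ n : ℤ, n ≠ 0 → n • z = 0 → z = 0 := by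
  induction k using Nat.strong_induction_on with
  | _ k IH =>
  intro X z hz n hn hnz
  rcases Nat.lt_or_ge k 2 with hk | hk
  · interval_cases k
    · have hempty : {M : BT X | M.len = 0} = ∅ := by
        ext M
        simp only [Set.mem_setOf_eq, Set.mem_empty_iff_false, iff_false]
        have := M.one_le_len
        omega
      rw [hempty, btSpan_empty] at hz
      exact (Submodule.mem_bot ℤ).mp hz
    · exact torsion_len_one hz hn hnz
  · classical
    -- the key claim, by induction on a finite set of letters
    have Q : ∀ (F : Finset X), ∀ z' : FreeLieAlgebra ℤ X, n • z' = 0 →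
        z' ∈ btSpan X {M | M.len = k ∧ ∀ s ∈ M.lettersList, s ∈ F} → z' = 0 := by
      intro F
      induction F using Finset.induction_on with
      | empty =>
        intro z' _ hz'
        have hempty : {M : BT X | M.len = k ∧ ∀ s ∈ M.lettersList, s ∈ (∅ : Finset X)} = ∅ := by
          ext M
          simp only [Set.mem_setOf_eq, Set.mem_empty_iff_false, iff_false, not_and]
          intro _ hall
          obtain ⟨s, hs⟩ := List.exists_mem_of_ne_nil _ (M.lettersList_ne_nil)
          exact absurd (hall s hs) (by simp)
        rw [hempty, btSpan_empty] at hz'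
        exact (Submodule.mem_bot ℤ).mp hz'
      | @insert x F hx IHF =>
        intro z' hnz' hz'
        obtain ⟨T, hT⟩ := piW_decomp (w := indic x) hz'
        rw [hT T (subset_refl T)]
        apply Finset.sum_eq_zero
        intro m _
        have hzm := piW_mem_btSpan (w := indic x) (k := m) hz'
        have hzmtor : n • piW (indic x) m z' = 0 := by
          rw [← map_smul, hnz', map_zero]
        rcases Nat.eq_zero_or_pos m with hm0 | hmpos
        · subst hm0
          refine IHF _ hzmtor (Submodule.span_mono (Set.image_mono ?_) hzm)
          rintro M ⟨⟨hMl, hMF⟩, hMw⟩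
          refine ⟨hMl, fun s hs => ?_⟩
          have hsx : s ≠ x := by
            intro hcontra
            subst hcontra
            exact BT.not_mem_letters_of_wt_indic_zero hMw hs
          rcases Finset.mem_insert.mp (hMF s hs) with h | h
          · exact absurd h hsx
          · exact h
        · refine claimE x k m hk hmpos
            (fun k' hk' u hu n' hn' hnu => IH k' hk' (Kgen x) u hu n' hn' hnu)
            _ ?_ n hn hzmtor
          refine Submodule.span_mono (Set.image_mono ?_) hzm
          rintro M ⟨⟨hMl, _⟩, hMw⟩
          exact ⟨hMl, hMw⟩
    -- produce the finite letter set
    obtain ⟨c, hsupp, hsum⟩ := Submodule.mem_span_set.mp hz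
    have hletter : ∀ v : c.support, ∃ M : BT X, M.len = k ∧ M.eval = (v : FreeLieAlgebra ℤ X) := by
      rintro ⟨v, hv⟩
      obtain ⟨M, hM, rfl⟩ := hsupp hv
      exact ⟨M, hM, rfl⟩
    choose tr htr1 htr2 using hletter
    have hzF : z ∈ btSpan X {M | M.len = k ∧ ∀ s ∈ M.lettersList,
        s ∈ c.support.attach.biUnion (fun v => (tr v).lettersList.toFinset)} := by
      rw [← hsum]
      apply Submodule.finsuppSum_mem
      intro v hv
      have hv' : v ∈ c.support := Finsupp.mem_support_iff.mpr hv
      refine Submodule.smul_mem _ _ (Submodule.subset_span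
        ⟨tr ⟨v, hv'⟩, ⟨htr1 ⟨v, hv'⟩, ?_⟩, htr2 ⟨v, hv'⟩⟩)
      intro s hs
      exact Finset.mem_biUnion.mpr ⟨⟨v, hv'⟩, Finset.mem_attach _ _, List.mem_toFinset.mpr hs⟩
    exact Q _ z hnz hzF

/-- Free Lie rings over `ℤ` are torsion-free. -/
theorem freeLie_torsionFree (X : Type v) (z : FreeLieAlgebra ℤ X)
    (n : ℤ) (hn : n ≠ 0) (hnz : n • z = 0) : z = 0 := by
  have hz : z ∈ btSpan X Set.univ := by rw [btSpan_univ_eq_top]; trivial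
  obtain ⟨T, hT⟩ := piW_decomp (w := fun _ => 1) hz
  rw [hT T (subset_refl T)]
  apply Finset.sum_eq_zero
  intro m _
  have hzm := piW_mem_btSpan (w := fun _ => 1) (k := m) hz
  have hzmtor : n • piW (fun _ => 1) m z = 0 := by rw [← map_smul, hnz, map_zero]
  refine torsionfree_deg m X _ ?_ n hn hzmtor
  refine Submodule.span_mono (Set.image_mono ?_) hzm
  rintro M ⟨_, hMw⟩
  exact hMw

end TorsionFree

noncomputable section SL2

variable {X : Type v} (x : X)

lemma ed_de_span {r : ℕ} {𝓜 : Set (BT (Kgen x))} (h𝓜 : ∀ N ∈ 𝓜, N.len = r)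
    {u : KK x} (hu : u ∈ btSpan (Kgen x) 𝓜) :
    eK x (dK x u) - dK x (eK x u) = (r : ℤ) • u := by
  induction hu using Submodule.span_induction with
  | mem y hy =>
    obtain ⟨N, hN, rfl⟩ := hy
    rw [eK_dK_sub_dK_eK, h𝓜 N hN]
  | zero => simp
  | add y z _ _ h1 h2 =>
    simp only [map_add]
    rw [smul_add, ← h1, ← h2]
    abel
  | smul c y _ h =>
    simp only [map_smul]
    rw [← smul_sub, h, smul_comm]

lemma eK_pow_mem {r w : ℕ} {u : KK x}
    (hu : u ∈ btSpan (Kgen x) {N | N.len = r ∧ N.wt (wk x) = w}) :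
    ∀ j, ((eK x) ^ j) u ∈ btSpan (Kgen x) {N | N.len = r ∧ N.wt (wk x) + j = w} := by
  intro j
  induction j with
  | zero =>
    rw [pow_zero]
    refine Submodule.span_mono (Set.image_mono ?_) hu
    rintro N ⟨h1, h2⟩
    exact ⟨h1, by omega⟩
  | succ j hj =>
    rw [pow_succ', Module.End.mul_apply]
    have h := eK_btSpan x hj
    refine Submodule.span_mono (Set.image_mono ?_) h
    rintro N' ⟨N, ⟨hN1, hN2⟩, hl, hw⟩
    exact ⟨by omega, by omega⟩

lemma dK_eK_pow {r w : ℕ} {u : KK x}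
    (hu : u ∈ btSpan (Kgen x) {N | N.len = r ∧ N.wt (wk x) = w}) (hdu : dK x u = 0) :
    ∀ j : ℕ, dK x (((eK x) ^ (j + 1)) u) = (-(((j : ℤ) + 1) * r)) • (((eK x) ^ j) u) := by
  intro j
  induction j with
  | zero =>
    have hrel := ed_de_span x (fun N hN => hN.1) hu
    rw [hdu, map_zero, zero_sub] at hrel
    have h1 : dK x (eK x u) = -((r : ℤ) • u) := by
      rw [← hrel, neg_neg]
    rw [pow_one, pow_zero, Module.End.one_apply, h1]
    rw [← neg_smul]
    congr 1
    ring
  | succ j hj =>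
    have hv := eK_pow_mem x hu (j + 1)
    have hrel := ed_de_span x (fun N hN => hN.1) hv
    have he : eK x (dK x (((eK x) ^ (j + 1)) u))
        = (-(((j : ℤ) + 1) * r)) • (((eK x) ^ (j + 1)) u) := by
      rw [hj, map_smul]
      congr 1
      rw [pow_succ', Module.End.mul_apply]
    have : dK x (eK x (((eK x) ^ (j + 1)) u))
        = (-(((j : ℤ) + 1) * r)) • (((eK x) ^ (j + 1)) u) - (r : ℤ) • (((eK x) ^ (j + 1)) u) := by
      rw [← he, ← hrel]
      abel
    rw [pow_succ' (eK x) (j + 1), Module.End.mul_apply, this, ← sub_smul]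
    congr 1
    push_cast
    ring

lemma sl2_vanish {r w : ℕ} (hr : 1 ≤ r) {u : KK x}
    (hu : u ∈ btSpan (Kgen x) {N | N.len = r ∧ N.wt (wk x) = w}) (hdu : dK x u = 0) :
    u = 0 := by
  have hchain : ∀ i, i ≤ w + 1 → ((eK x) ^ (w + 1 - i)) u = 0 := by
    intro i
    induction i with
    | zero =>
      intro _
      have hmem := eK_pow_mem x hu (w + 1)
      have hempty : {N : BT (Kgen x) | N.len = r ∧ N.wt (wk x) + (w + 1) = w} = ∅ := by
        ext N
        simp only [Set.mem_setOf_eq, Set.mem_empty_iff_false, iff_false, not_and]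
        omega
      rw [hempty, btSpan_empty] at hmem
      exact (Submodule.mem_bot ℤ).mp hmem
    | succ i hi =>
      intro hle
      have hji : w + 1 - i = (w - i) + 1 := by omega
      have h0 : ((eK x) ^ ((w - i) + 1)) u = 0 := by
        rw [← hji]
        exact hi (by omega)
      have hC := dK_eK_pow x hu hdu (w - i)
      rw [h0, map_zero] at hC
      have hne : (-(((w - i : ℕ) : ℤ) + 1) * (r : ℤ)) ≠ 0 := by
        have : (0:ℤ) ≤ ((w - i : ℕ) : ℤ) := Int.natCast_nonneg _
        have hr' : (1:ℤ) ≤ (r:ℤ) := by exact_mod_cast hr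
        nlinarith
      have := freeLie_torsionFree (Kgen x) (((eK x) ^ (w - i)) u) _ hne hC.symm
      have hwi : w + 1 - (i + 1) = w - i := by omega
      rw [hwi]
      exact this
  have hfin := hchain (w + 1) (le_refl _)
  rw [Nat.sub_self, pow_zero, Module.End.one_apply] at hfin
  exact hfin

lemma piW_comm_dK (k : ℕ) (u : KK x) :
    piW (fun _ => 1) k (dK x u) = dK x (piW (fun _ => 1) k u) := by
  have hu : u ∈ btSpan (Kgen x) Set.univ := by rw [btSpan_univ_eq_top]; trivial
  induction hu using Submodule.span_induction with
  | mem y hy =>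
    obtain ⟨N, _, rfl⟩ := hy
    rw [piW_eval]
    have hd := dK_eval_mem x N
    by_cases hN : N.wt (fun _ => 1) = k
    · rw [if_pos hN]
      refine piW_eq_self_of_mem ?_ hd
      rintro N' ⟨h1, _⟩
      have h1' : N'.wt (fun _ => 1) = N.wt (fun _ => 1) := h1
      show N'.wt (fun _ => 1) = k
      rw [h1', hN]
    · rw [if_neg hN, map_zero]
      refine piW_eq_zero_of_mem ?_ hd
      rintro N' ⟨h1, _⟩ hcontra
      have h1' : N'.wt (fun _ => 1) = N.wt (fun _ => 1) := h1
      exact hN (by rw [← h1', hcontra])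
  | zero => simp
  | add y z _ _ h1 h2 => simp only [map_add]; rw [h1, h2]
  | smul c y _ h => simp only [map_smul]; rw [h]

lemma piW_wk_comm (w : ℕ) (u : KK x) :
    piW (wk x) (w + 1) (dK x u) = dK x (piW (wk x) w u) := by
  have hu : u ∈ btSpan (Kgen x) Set.univ := by rw [btSpan_univ_eq_top]; trivial
  induction hu using Submodule.span_induction with
  | mem y hy =>
    obtain ⟨N, _, rfl⟩ := hy
    rw [piW_eval]
    have hd := dK_eval_mem x N
    by_cases hN : N.wt (wk x) = w
    · rw [if_pos hN]
      refine piW_eq_self_of_mem ?_ hd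
      rintro N' ⟨_, h2⟩
      show N'.wt (wk x) = w + 1
      omega
    · rw [if_neg hN, map_zero]
      refine piW_eq_zero_of_mem ?_ hd
      rintro N' ⟨_, h2⟩ hcontra
      have : N'.wt (wk x) = w + 1 := hcontra
      omega
  | zero => simp
  | add y z _ _ h1 h2 => simp only [map_add]; rw [h1, h2]
  | smul c y _ h => simp only [map_smul]; rw [h]

/-- The shift derivation is injective. -/
theorem dK_injective {u : KK x} (hdu : dK x u = 0) : u = 0 := by
  have hz : u ∈ btSpan (Kgen x) Set.univ := by rw [btSpan_univ_eq_top]; trivial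
  obtain ⟨T, hT⟩ := piW_decomp (w := fun _ => 1) hz
  rw [hT T (subset_refl T)]
  apply Finset.sum_eq_zero
  intro r _
  have hur_mem : piW (fun _ => 1) r u ∈ btSpan (Kgen x) {N | N.len = r} := by
    refine Submodule.span_mono (Set.image_mono ?_) (piW_mem_btSpan hz)
    rintro N ⟨_, hN⟩
    exact hN
  have hdur : dK x (piW (fun _ => 1) r u) = 0 := by
    rw [← piW_comm_dK, hdu, map_zero]
  rcases Nat.eq_zero_or_pos r with hr0 | hrpos
  · subst hr0
    have hempty : {N : BT (Kgen x) | N.len = 0} = ∅ := by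
      ext N
      simp only [Set.mem_setOf_eq, Set.mem_empty_iff_false, iff_false]
      have := N.one_le_len
      omega
    rw [hempty, btSpan_empty] at hur_mem
    exact (Submodule.mem_bot ℤ).mp hur_mem
  · obtain ⟨T2, hT2⟩ := piW_decomp (w := wk x) hur_mem
    rw [hT2 T2 (subset_refl T2)]
    apply Finset.sum_eq_zero
    intro w _
    have hmem2 : piW (wk x) w (piW (fun _ => 1) r u)
        ∈ btSpan (Kgen x) {N | N.len = r ∧ N.wt (wk x) = w} := by
      refine Submodule.span_mono (Set.image_mono ?_) (piW_mem_btSpan hur_mem)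
      rintro N ⟨h1, h2⟩
      exact ⟨h1, h2⟩
    have hd2 : dK x (piW (wk x) w (piW (fun _ => 1) r u)) = 0 := by
      rw [← piW_wk_comm, hdur, map_zero]
    exact sl2_vanish x hrpos hmem2 hd2

end SL2

/-- In the free Lie algebra over ℤ on a set `S` with at least two elements, the
centralizer of a generator `a ∈ S` is exactly the ℤ-linear span of `a`. -/
theorem centralizer_of_generator_in_free_lie_algebra (S : Type*) (a : S)
    (hS : ∃ b : S, b ≠ a) :
    {x : FreeLieAlgebra ℤ S | ⁅x, FreeLieAlgebra.of ℤ a⁆ = 0} =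
      ↑(Submodule.span ℤ {FreeLieAlgebra.of ℤ a}) := by
  ext y
  simp only [Set.mem_setOf_eq, SetLike.mem_coe]
  constructor
  · intro hy
    have h : ⁅fE a y, fE a (of ℤ a)⁆ = 0 := by
      rw [← LieHom.map_lie, hy, map_zero]
    have h2 := congrArg Prod.snd h
    have h3 : (fE a y).1 • dK a (fE a (of ℤ a)).2 - (fE a (of ℤ a)).1 • dK a (fE a y).2
        + ⁅(fE a y).2, (fE a (of ℤ a)).2⁆ = 0 := h2
    have e1 : (fE a (of ℤ a)).1 = 1 := by rw [fE_of_x]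
    have e2 : (fE a (of ℤ a)).2 = 0 := by rw [fE_of_x]
    rw [e1, e2] at h3
    rw [map_zero, smul_zero, lie_zero, add_zero, zero_sub, one_smul, neg_eq_zero] at h3
    have h4 : (fE a y).2 = 0 := dK_injective a h3
    have h5 : fE a ((fE a y).1 • of ℤ a) = fE a y := by
      rw [map_smul, fE_of_x]
      have : (fE a y).1 • (((1 : ℤ), 0) : ℤ × KK a)
          = (((fE a y).1 • (1 : ℤ), (fE a y).1 • (0 : KK a)) : ℤ × KK a) := rfl
      refine this.trans ?_
      have hpair : fE a y = (((fE a y).1, (fE a y).2) : ℤ × KK a) := rfl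
      rw [hpair, h4]
      rw [Prod.mk.injEq]
      constructor
      · rw [smul_eq_mul, mul_one]
      · rw [smul_zero]
    have h6 : (fE a y).1 • of ℤ a = y := fE_injective a h5
    exact Submodule.mem_span_singleton.mpr ⟨(fE a y).1, h6⟩
  · intro hy
    obtain ⟨c, rfl⟩ := Submodule.mem_span_singleton.mp hy
    rw [smul_lie, lie_self, smul_zero]
end

section
/- Let A be a free abelian group with basis S containing an element a, with |S| ≥ 2. If x ∈ A^{⊗n} (a homogeneous element of the tensor algebra T[A]) satisfies a ⊗ x = x ⊗ a, then x is an integer multiple of a^{⊗n}. -/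
open FreeMonoid MonoidAlgebra

private lemma aux_first_nonconst {S : Type*} (s₀ : S) :
    ∀ l : List S, l ≠ List.replicate l.length s₀ →
      ∃ i t r, t ≠ s₀ ∧ l = List.replicate i s₀ ++ t :: r := by
  intro l
  induction l with
  | nil => simp
  | cons h tl ih =>
    intro hne
    by_cases hh : h = s₀
    · have htl : tl ≠ List.replicate tl.length s₀ := by
        intro hrepl
        apply hne
        rw [List.length_cons, List.replicate_succ, hh, ← hrepl]
      obtain ⟨i, t, r, ht, hrep⟩ := ih htl
      exact ⟨i + 1, t, r, ht, by rw [List.replicate_succ, hh, List.cons_append, hrep]⟩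
    · exact ⟨0, h, tl, hh, by simp⟩

private lemma toList_pow_of {S : Type*} (s₀ : S) (n : ℕ) :
    FreeMonoid.toList (FreeMonoid.of s₀ ^ n) = List.replicate n s₀ := by
  induction n with
  | zero => rfl
  | succ n ih =>
    rw [pow_succ', FreeMonoid.toList_mul, ih, FreeMonoid.toList_of]
    simp [List.replicate_succ]

private lemma no_bad_word {S : Type*} (s₀ : S) (y : MonoidAlgebra ℤ (FreeMonoid S))
    (hrot : ∀ v ∈ y.coeff.support, ∃ w ∈ y.coeff.support,
      v * FreeMonoid.of s₀ = FreeMonoid.of s₀ * w) :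
    ∀ i (v : FreeMonoid S), v ∈ y.coeff.support → ∀ (t : S) (r : List S), t ≠ s₀ →
      FreeMonoid.toList v = List.replicate i s₀ ++ t :: r → False := by
  intro i
  induction i with
  | zero =>
    intro v hv t r ht hl
    obtain ⟨w, _, hw⟩ := hrot v hv
    have := congrArg FreeMonoid.toList hw
    rw [FreeMonoid.toList_mul, FreeMonoid.toList_mul, FreeMonoid.toList_of, hl] at this
    simp at this
    exact ht this.1
  | succ i ih =>
    intro v hv t r ht hl
    obtain ⟨w, hwmem, hw⟩ := hrot v hv
    have heq := congrArg FreeMonoid.toList hw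
    rw [FreeMonoid.toList_mul, FreeMonoid.toList_mul, FreeMonoid.toList_of, hl] at heq
    rw [List.replicate_succ] at heq
    simp only [List.cons_append, List.cons.injEq, true_and] at heq
    apply ih w hwmem t (r ++ [s₀]) ht
    simp only [List.nil_append] at heq
    rw [← heq]
    simp

/-- Let `M` be a free ℤ-module with basis indexed by `S` (with `|S| ≥ 2`) and let
`a = b s₀` be a basis element.  If a homogeneous element `x` of degree `n` of the
tensor algebra `T[M]` satisfies `a ⊗ x = x ⊗ a`, then `x` is an integer multiple of
`a^{⊗n}`. -/
theorem homogeneous_commutes_with_basis_element (S : Type*) (M : Type*)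
    [AddCommGroup M] [Module ℤ M] (b : Module.Basis S ℤ M) (s₀ : S) (hS : ∃ s : S, s ≠ s₀)
    (n : ℕ) (x : TensorAlgebra ℤ M)
    (hx : x ∈ (LinearMap.range (TensorAlgebra.ι ℤ : M →ₗ[ℤ] TensorAlgebra ℤ M)) ^ n)
    (hcomm : TensorAlgebra.ι ℤ (b s₀) * x = x * TensorAlgebra.ι ℤ (b s₀)) :
    ∃ k : ℤ, x = k • (TensorAlgebra.ι ℤ (b s₀)) ^ n := by
  classical
  set φ : TensorAlgebra ℤ M ≃ₐ[ℤ] MonoidAlgebra ℤ (FreeMonoid S) :=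
    (TensorAlgebra.equivFreeAlgebra b).trans (FreeAlgebra.equivMonoidAlgebraFreeMonoid) with hφ
  have hφι : ∀ s : S, φ (TensorAlgebra.ι ℤ (b s))
      = MonoidAlgebra.single (FreeMonoid.of s) 1 := by
    intro s
    show FreeAlgebra.equivMonoidAlgebraFreeMonoid (TensorAlgebra.equivFreeAlgebra b (TensorAlgebra.ι ℤ (b s))) = _
    rw [TensorAlgebra.equivFreeAlgebra_ι_apply]
    rw [FreeAlgebra.equivMonoidAlgebraFreeMonoid]
    simp [FreeAlgebra.lift_ι_apply, MonoidAlgebra.of_apply]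
  -- every element of degree 1 has support in words of length 1
  have hdeg1 : ∀ m : M, ∀ u ∈ (φ (TensorAlgebra.ι ℤ m)).coeff.support, u.length = 1 := by
    have key : ∀ m : M, φ (TensorAlgebra.ι ℤ m) ∈
        MonoidAlgebra.supported ℤ ℤ {w : FreeMonoid S | w.length = 1} := by
      intro m
      have hm : m ∈ Submodule.span ℤ (Set.range b) := by rw [b.span_eq]; trivial
      have hle : Submodule.span ℤ (Set.range b) ≤ Submodule.comap
          (φ.toLinearMap ∘ₗ (TensorAlgebra.ι ℤ : M →ₗ[ℤ] TensorAlgebra ℤ M))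
          (MonoidAlgebra.supported ℤ ℤ {w : FreeMonoid S | w.length = 1}) := by
        refine Submodule.span_le.mpr ?_
        rintro _ ⟨s, rfl⟩
        rw [SetLike.mem_coe, Submodule.mem_comap]
        show φ (TensorAlgebra.ι ℤ (b s)) ∈ _
        rw [hφι s]
        exact (MonoidAlgebra.mem_supported).mpr (by simp [MonoidAlgebra.coeff_single, FreeMonoid.length_of])
      have h2 := hle hm
      rw [Submodule.mem_comap] at h2
      simpa only [LinearMap.coe_comp, Function.comp_apply, AlgEquiv.toLinearMap_apply] using h2
    intro m u hu
    have := (MonoidAlgebra.mem_supported).mp (key m) hu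
    exact this
  -- homogeneity: support of φ x consists of words of length n
  have hdegn : ∀ u ∈ (φ x).coeff.support, u.length = n := by
    refine Submodule.pow_induction_on_left'
      (M := LinearMap.range (TensorAlgebra.ι ℤ : M →ₗ[ℤ] TensorAlgebra ℤ M))
      (C := fun i z _ => ∀ u ∈ (φ z).coeff.support, u.length = i) ?_ ?_ ?_ hx
    · intro r u hu
      replace hu : u ∈ (algebraMap ℤ (MonoidAlgebra ℤ (FreeMonoid S)) r).coeff.support := by
        rw [← φ.commutes r]; exact hu
      have h1 : (algebraMap ℤ (MonoidAlgebra ℤ (FreeMonoid S)) r)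
          = MonoidAlgebra.single 1 r := rfl
      rw [h1, MonoidAlgebra.coeff_single] at hu
      have := Finsupp.support_single_subset hu
      simp only [Finset.mem_singleton] at this
      subst this
      exact FreeMonoid.length_one
    · intro z w i _ _ hz hw u hu
      rw [map_add, MonoidAlgebra.coeff_add] at hu
      rcases Finset.mem_union.mp (Finsupp.support_add hu) with h | h
      · exact hz u h
      · exact hw u h
    · rintro m ⟨v, rfl⟩ i z _ hz u hu
      rw [map_mul] at hu
      have := MonoidAlgebra.support_coeff_mul_subset _ _ hu
      rw [Finset.mem_mul] at this
      obtain ⟨a, ha, c, hc, rfl⟩ := this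
      rw [FreeMonoid.length_mul, hdeg1 v a ha, hz c hc]
      omega
  -- transfer the commutation relation
  have hy : MonoidAlgebra.single (FreeMonoid.of s₀) (1 : ℤ) * φ x
      = φ x * MonoidAlgebra.single (FreeMonoid.of s₀) 1 := by
    have := congrArg φ hcomm
    rw [map_mul, map_mul, hφι s₀] at this
    exact this
  -- rotation property of the support
  have hrot : ∀ v ∈ (φ x).coeff.support, ∃ w ∈ (φ x).coeff.support,
      v * FreeMonoid.of s₀ = FreeMonoid.of s₀ * w := by
    intro v hv
    have hr : ∀ z : ℤ, z * 1 = 0 ↔ z = 0 := by simp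
    have hl : ∀ z : ℤ, 1 * z = 0 ↔ z = 0 := by simp
    have hsupp := congrArg (fun z => z.coeff.support) hy
    rw [MonoidAlgebra.support_coeff_single_mul _ _ hl, MonoidAlgebra.support_coeff_mul_single _ _ hr] at hsupp
    have hvmem : v * FreeMonoid.of s₀ ∈ (φ x).coeff.support.map (mulRightEmbedding (FreeMonoid.of s₀)) := by
      rw [Finset.mem_map]
      exact ⟨v, hv, rfl⟩
    rw [← hsupp] at hvmem
    rw [Finset.mem_map] at hvmem
    obtain ⟨w, hw, hww⟩ := hvmem
    exact ⟨w, hw, hww.symm⟩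
  -- every word in the support is (of s₀)^n
  have hsupp_sub : (φ x).coeff.support ⊆ {FreeMonoid.of s₀ ^ n} := by
    intro v hv
    rw [Finset.mem_singleton]
    by_contra hvne
    have hlen : v.length = n := hdegn v hv
    have hvl : FreeMonoid.toList v ≠ List.replicate (FreeMonoid.toList v).length s₀ := by
      intro h
      apply hvne
      have : FreeMonoid.toList v = FreeMonoid.toList (FreeMonoid.of s₀ ^ n) := by
        rw [toList_pow_of]
        have : (FreeMonoid.toList v).length = n := hlen
        rw [h, this]
      exact FreeMonoid.toList.injective this
    obtain ⟨i, t, r, ht, hrep⟩ := aux_first_nonconst s₀ (FreeMonoid.toList v) hvl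
    exact no_bad_word s₀ (φ x) hrot i v hv t r ht hrep
  -- conclude
  have hxy : φ x = MonoidAlgebra.single (FreeMonoid.of s₀ ^ n) ((φ x).coeff (FreeMonoid.of s₀ ^ n)) :=
    MonoidAlgebra.ext (Finsupp.support_subset_singleton.mp hsupp_sub)
  refine ⟨(φ x).coeff (FreeMonoid.of s₀ ^ n), ?_⟩
  have hpow : φ ((TensorAlgebra.ι ℤ (b s₀)) ^ n)
      = MonoidAlgebra.single (FreeMonoid.of s₀ ^ n) (1 : ℤ) := by
    rw [map_pow, hφι s₀, MonoidAlgebra.single_pow, one_pow]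
  apply φ.injective
  rw [map_zsmul, hpow, MonoidAlgebra.smul_single, smul_eq_mul, mul_one]
  exact hxy
end

section
/- In the tensor algebra T[A] on a free ℤ-module A with basis S of cardinality at least 2, any element that commutes with a fixed basis element a ∈ S lies in the subalgebra generated by a. -/
open MonoidAlgebra FreeMonoid

private lemma fm_list_decomp {S : Type*} (s₀ : S) :
    ∀ w : List S, (∃ n, w = List.replicate n s₀) ∨
      ∃ k hd tl, hd ≠ s₀ ∧ w = List.replicate k s₀ ++ hd :: tl := by
  intro w
  induction w with
  | nil => exact Or.inl ⟨0, rfl⟩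
  | cons a t ih =>
    by_cases ha : a = s₀
    · subst ha
      rcases ih with ⟨n, rfl⟩ | ⟨k, hd, tl, hhd, rfl⟩
      · exact Or.inl ⟨n + 1, rfl⟩
      · exact Or.inr ⟨k + 1, hd, tl, hhd, rfl⟩
    · exact Or.inr ⟨0, a, t, ha, rfl⟩

private lemma fm_of_pow {S : Type*} (s₀ : S) (n : ℕ) :
    (FreeMonoid.of s₀) ^ n = FreeMonoid.ofList (List.replicate n s₀) := by
  induction n with
  | zero => rfl
  | succ n ih => rw [pow_succ', ih]; rfl

private lemma key_centralizer {S : Type*} (s₀ : S) (x : MonoidAlgebra ℤ (FreeMonoid S))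
    (hcomm : single (of s₀) (1:ℤ) * x = x * single (of s₀) 1) :
    x ∈ Algebra.adjoin ℤ ({single (of s₀) (1:ℤ)} : Set (MonoidAlgebra ℤ (FreeMonoid S))) := by
  -- basic coefficient computation
  have hcoef : ∀ z : FreeMonoid S,
      x.coeff z = (x * single (of s₀) (1:ℤ)).coeff (of s₀ * z) := by
    intro z
    have H : ∀ a : FreeMonoid S, of s₀ * a = of s₀ * z ↔ a = z :=
      fun a => ⟨fun h => mul_left_cancel h, fun h => by rw [h]⟩
    have := coeff_single_mul_eq_mul_coeff (x := x) (r := (1:ℤ)) z (fun a _ => H a)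
    rw [hcomm] at this
    rw [this, one_mul]
  -- vanishing of coefficients on words that are not powers of s₀
  have hvan : ∀ (m k : ℕ) (hd : S) (tl : List S), tl.length = m → hd ≠ s₀ →
      x.coeff (FreeMonoid.ofList (List.replicate k s₀ ++ hd :: tl)) = 0 := by
    intro m
    induction m with
    | zero =>
      intro k hd tl htl hhd
      rw [List.length_eq_zero_iff] at htl
      subst htl
      rw [hcoef]
      apply mul_single_apply_of_not_exists_mul
      rintro ⟨d, hd_eq⟩
      have : FreeMonoid.toList (of s₀ * FreeMonoid.ofList (List.replicate k s₀ ++ [hd]))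
          = FreeMonoid.toList (d * of s₀) := by rw [hd_eq]
      simp only [toList_mul, toList_of, toList_ofList] at this
      have hlast := congrArg List.getLast? this
      rw [List.getLast?_concat] at hlast
      have : ([s₀] ++ List.replicate k s₀ ++ [hd]).getLast? = some hd := by
        rw [List.append_assoc, ← List.singleton_append, ← List.append_assoc,
          List.getLast?_concat]
      rw [← List.append_assoc] at hlast
      rw [this] at hlast
      exact hhd (Option.some_injective _ hlast)
    | succ m ih =>
      intro k hd tl htl hhd
      rw [hcoef]
      by_cases hex : ∃ d, of s₀ * FreeMonoid.ofList (List.replicate k s₀ ++ hd :: tl)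
          = d * of s₀
      · obtain ⟨d, hd_eq⟩ := hex
        rw [hd_eq]
        have H : ∀ a : FreeMonoid S, a * of s₀ = d * of s₀ ↔ a = d :=
          fun a => ⟨fun h => mul_right_cancel h, fun h => by rw [h]⟩
        rw [coeff_mul_single_eq_coeff_mul (x := x) (r := (1:ℤ)) d (fun a _ => H a)]
        -- now show x d = 0 using ih
        have htl_ne : tl ≠ [] := by intro h; rw [h] at htl; simp at htl
        have hdecomp := List.dropLast_append_getLast htl_ne
        have hlists : FreeMonoid.toList (of s₀ *
            FreeMonoid.ofList (List.replicate k s₀ ++ hd :: tl))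
            = FreeMonoid.toList (d * of s₀) := by rw [hd_eq]
        simp only [toList_mul, toList_of, toList_ofList] at hlists
        rw [← hdecomp] at hlists
        have hre : [s₀] ++ (List.replicate k s₀ ++ hd :: (tl.dropLast ++ [tl.getLast htl_ne]))
            = ([s₀] ++ List.replicate k s₀ ++ hd :: tl.dropLast) ++ [tl.getLast htl_ne] := by
          simp
        rw [hre] at hlists
        have hdl := congrArg List.dropLast hlists
        rw [List.dropLast_concat, List.dropLast_concat] at hdl
        have hd_val : FreeMonoid.toList d = List.replicate (k+1) s₀ ++ hd :: tl.dropLast := by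
          rw [← hdl]; simp [List.replicate_succ]
        have hlen : tl.dropLast.length = m := by
          rw [List.length_dropLast, htl]; rfl
        have := ih (k+1) hd tl.dropLast hlen hhd
        rw [← hd_val, ofList_toList] at this
        rw [this, zero_mul]
      · exact x.mul_single_apply_of_not_exists_mul _ hex
  -- support consists of powers of s₀
  have hx : ∀ w ∈ x.coeff.support, ∃ n : ℕ, w = of s₀ ^ n := by
    intro w hw
    rcases fm_list_decomp s₀ (toList w) with ⟨n, hn⟩ | ⟨k, hd, tl, hhd, heq⟩
    · refine ⟨n, ?_⟩
      rw [fm_of_pow, ← hn, ofList_toList]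
    · exfalso
      apply Finsupp.mem_support_iff.mp hw
      have := hvan tl.length k hd tl rfl hhd
      rwa [← heq, ofList_toList] at this
  -- conclude
  rw [← sum_coeff_single x, Finsupp.sum]
  apply Subalgebra.sum_mem
  intro w hw
  obtain ⟨n, rfl⟩ := hx w hw
  have heq : single (of s₀ ^ n) (x.coeff (of s₀ ^ n))
      = x.coeff (of s₀ ^ n) • (single (of s₀) (1:ℤ)) ^ n := by
    rw [single_pow, one_pow, MonoidAlgebra.smul_single, smul_eq_mul, mul_one]
  rw [heq]
  apply Subalgebra.smul_mem
  apply Subalgebra.pow_mem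
  exact Algebra.subset_adjoin (Set.mem_singleton _)

/-- In the tensor algebra on a free ℤ-module `M` with basis indexed by `S` (with
`|S| ≥ 2`), any element commuting with a fixed basis element `a = b s₀` lies in the
subalgebra generated by `a`. -/
theorem commutant_of_basis_element_in_tensor_algebra (S : Type*) (M : Type*)
    [AddCommGroup M] [Module ℤ M] (b : Module.Basis S ℤ M) (s₀ : S) (hS : ∃ s : S, s ≠ s₀)
    (x : TensorAlgebra ℤ M)
    (hcomm : TensorAlgebra.ι ℤ (b s₀) * x = x * TensorAlgebra.ι ℤ (b s₀)) :
    x ∈ Algebra.adjoin ℤ ({TensorAlgebra.ι ℤ (b s₀)} : Set (TensorAlgebra ℤ M)) := by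
  let e : TensorAlgebra ℤ M ≃ₐ[ℤ] MonoidAlgebra ℤ (FreeMonoid S) :=
    (TensorAlgebra.equivFreeAlgebra b).trans FreeAlgebra.equivMonoidAlgebraFreeMonoid
  have he : e (TensorAlgebra.ι ℤ (b s₀)) = single (of s₀) (1:ℤ) := by
    show FreeAlgebra.equivMonoidAlgebraFreeMonoid
      (TensorAlgebra.equivFreeAlgebra b (TensorAlgebra.ι ℤ (b s₀))) = _
    rw [TensorAlgebra.equivFreeAlgebra_ι_apply]
    simp [FreeAlgebra.equivMonoidAlgebraFreeMonoid, MonoidAlgebra.of_apply]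
  have hkey := key_centralizer s₀ (e x)
    (by rw [← he, ← map_mul, ← map_mul, hcomm])
  have hmem : e x ∈ (Algebra.adjoin ℤ {TensorAlgebra.ι ℤ (b s₀)}).map
      (e : TensorAlgebra ℤ M →ₐ[ℤ] MonoidAlgebra ℤ (FreeMonoid S)) := by
    rw [← Algebra.adjoin_image, Set.image_singleton]
    have : ((e : TensorAlgebra ℤ M →ₐ[ℤ] MonoidAlgebra ℤ (FreeMonoid S))
        (TensorAlgebra.ι ℤ (b s₀))) = single (of s₀) (1:ℤ) := he
    rw [this]
    exact hkey
  obtain ⟨y, hy, hey⟩ := hmem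
  rwa [← e.injective hey]
end

section
/- In the Lie algebra L(n) (the quotient of the free Lie algebra on B_{i,j}, 1 ≤ i < j ≤ n, by the infinitesimal braid relations), the Lie subalgebra generated by {B_{1,n}, …, B_{n-1,n}} is a Lie ideal of L(n). -/
open FreeLieAlgebra

/-- Index set for the generators `B_{i,j}`, `1 ≤ i < j ≤ n`, of the pure braid Lie algebra. -/
abbrev PBGen (n : ℕ) : Type := {p : Fin n × Fin n // p.1 < p.2}

/-- The generator `B_{i,j}` in the free Lie algebra, with the convention `B_{j,i} = B_{i,j}`
(and `B_{i,i} = 0`, never used). -/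
noncomputable def Bpre {n : ℕ} (i j : Fin n) : FreeLieAlgebra ℤ (PBGen n) :=
  if h : i < j then FreeLieAlgebra.of ℤ ⟨(i, j), h⟩
  else if h' : j < i then FreeLieAlgebra.of ℤ ⟨(j, i), h'⟩ else 0

/-- The infinitesimal braid relations. -/
def pbRelations (n : ℕ) : Set (FreeLieAlgebra ℤ (PBGen n)) :=
  {x | ∃ i j s t : Fin n, ({i, j} ∩ {s, t} : Set (Fin n)) = ∅ ∧
      x = ⁅Bpre i j, Bpre s t⁆} ∪
  {x | ∃ i j s : Fin n, i ≠ j ∧ j ≠ s ∧ i ≠ s ∧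
      x = ⁅Bpre i j, Bpre i s + Bpre s j⁆}

/-- The Lie ideal generated by the infinitesimal braid relations. -/
noncomputable def pbIdeal (n : ℕ) : LieIdeal ℤ (FreeLieAlgebra ℤ (PBGen n)) :=
  LieSubmodule.lieSpan ℤ (FreeLieAlgebra ℤ (PBGen n)) (pbRelations n)

/-- `L(n)`, the holonomy Lie algebra of the pure braid arrangement. -/
abbrev LnAlg (n : ℕ) : Type := FreeLieAlgebra ℤ (PBGen n) ⧸ pbIdeal n

/-- The class of `B_{i,j}` in `L(n)`. -/
noncomputable def Bq {n : ℕ} (i j : Fin n) : LnAlg n :=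
  LieSubmodule.Quotient.mk' (pbIdeal n) (Bpre i j)

/-- `Δ(n) = Σ_{1 ≤ i < j ≤ n} B_{i,j}` in `L(n)`. -/
noncomputable def Delta (n : ℕ) : LnAlg n :=
  ∑ p : PBGen n, LieSubmodule.Quotient.mk' (pbIdeal n) (FreeLieAlgebra.of ℤ p)

section Aux

variable {n : ℕ}

/-- The generating set of the top subalgebra. -/
abbrev genSet (n : ℕ) : Set (LnAlg (n + 1)) :=
  {z | ∃ p : Fin (n + 1), p ≠ Fin.last n ∧ z = Bq p (Fin.last n)}

lemma Bpre_symm (i j : Fin n) : Bpre i j = Bpre j i := by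
  unfold Bpre
  rcases lt_trichotomy i j with h | h | h
  · rw [dif_pos h, dif_neg (not_lt.2 h.le), dif_pos h]
  · subst h; rfl
  · rw [dif_neg (not_lt.2 h.le), dif_pos h, dif_pos h]

lemma Bq_symm (i j : Fin n) : Bq i j = Bq j i := by
  unfold Bq; rw [Bpre_symm]

lemma Bq_self (i : Fin n) : Bq i i = 0 := by
  unfold Bq Bpre
  rw [dif_neg (lt_irrefl i), dif_neg (lt_irrefl i)]
  simp

lemma mk_rel {r : FreeLieAlgebra ℤ (PBGen n)} (hr : r ∈ pbRelations n) :
    LieSubmodule.Quotient.mk' (pbIdeal n) r = 0 :=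
  (LieSubmodule.Quotient.mk_eq_zero _).2 (LieSubmodule.subset_lieSpan hr)

lemma brel1 (i j s t : Fin n) (h : ({i, j} ∩ {s, t} : Set (Fin n)) = ∅) :
    ⁅Bq i j, Bq s t⁆ = 0 := by
  have h0 : LieSubmodule.Quotient.mk' (pbIdeal n) ⁅Bpre i j, Bpre s t⁆ = 0 :=
    mk_rel (Or.inl ⟨i, j, s, t, h, rfl⟩)
  have : LieSubmodule.Quotient.mk' (pbIdeal n) ⁅Bpre i j, Bpre s t⁆
      = ⁅Bq i j, Bq s t⁆ := rfl
  rw [this] at h0; exact h0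

lemma brel2 (i j s : Fin n) (hij : i ≠ j) (hjs : j ≠ s) (his : i ≠ s) :
    ⁅Bq i j, Bq i s⁆ + ⁅Bq i j, Bq s j⁆ = 0 := by
  have h0 : LieSubmodule.Quotient.mk' (pbIdeal n) ⁅Bpre i j, Bpre i s + Bpre s j⁆ = 0 :=
    mk_rel (Or.inr ⟨i, j, s, hij, hjs, his, rfl⟩)
  have : LieSubmodule.Quotient.mk' (pbIdeal n) ⁅Bpre i j, Bpre i s + Bpre s j⁆
      = ⁅Bq i j, Bq i s⁆ + ⁅Bq i j, Bq s j⁆ := by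
    rw [lie_add, map_add]; rfl
  rw [this] at h0; exact h0

lemma key (i j p : Fin (n + 1)) (hi : i ≠ Fin.last n) (hj : j ≠ Fin.last n) :
    ⁅Bq i j, Bq p (Fin.last n)⁆ ∈ LieSubalgebra.lieSpan ℤ (LnAlg (n + 1)) (genSet n) := by
  set S := LieSubalgebra.lieSpan ℤ (LnAlg (n + 1)) (genSet n) with hS
  by_cases hp : p = Fin.last n
  · rw [hp, Bq_self, lie_zero]; exact S.zero_mem
  have hpS : Bq p (Fin.last n) ∈ S := LieSubalgebra.subset_lieSpan ⟨p, hp, rfl⟩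
  by_cases hij : i = j
  · rw [hij, Bq_self, zero_lie]; exact S.zero_mem
  by_cases hpi : p = i
  · subst hpi
    -- relation: ⁅B_{p,last}, B_{p,j}⁆ + ⁅B_{p,last}, B_{j,last}⁆ = 0
    have h0 := brel2 p (Fin.last n) j hp (Ne.symm hj) hij
    have hjS : Bq j (Fin.last n) ∈ S := LieSubalgebra.subset_lieSpan ⟨j, hj, rfl⟩
    have h1 : ⁅Bq p j, Bq p (Fin.last n)⁆ = ⁅Bq p (Fin.last n), Bq j (Fin.last n)⁆ := by
      have h2 : ⁅Bq p (Fin.last n), Bq p j⁆ = -⁅Bq p (Fin.last n), Bq j (Fin.last n)⁆ :=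
        eq_neg_of_add_eq_zero_left h0
      rw [← lie_skew, h2, neg_neg]
    rw [h1]; exact S.lie_mem hpS hjS
  by_cases hpj : p = j
  · subst hpj
    have h0 := brel2 p (Fin.last n) i hp (Ne.symm hi) (Ne.symm hij)
    have hiS : Bq i (Fin.last n) ∈ S := LieSubalgebra.subset_lieSpan ⟨i, hi, rfl⟩
    have h1 : ⁅Bq i p, Bq p (Fin.last n)⁆ = ⁅Bq p (Fin.last n), Bq i (Fin.last n)⁆ := by
      have h2 : ⁅Bq p (Fin.last n), Bq p i⁆ = -⁅Bq p (Fin.last n), Bq i (Fin.last n)⁆ :=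
        eq_neg_of_add_eq_zero_left h0
      rw [← lie_skew, Bq_symm i p, h2, neg_neg]
    rw [h1]; exact S.lie_mem hpS hiS
  · have hdisj : ({i, j} ∩ {p, Fin.last n} : Set (Fin (n + 1))) = ∅ := by
      ext a
      simp only [Set.mem_inter_iff, Set.mem_insert_iff, Set.mem_singleton_iff,
        Set.mem_empty_iff_false, iff_false, not_and]
      rintro (rfl | rfl) <;> rintro (rfl | rfl) <;>
        first
        | exact hpi rfl | exact hpj rfl | exact hi rfl | exact hj rfl
    rw [brel1 i j p (Fin.last n) hdisj]; exact S.zero_mem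

lemma gen_normalizer (i j : Fin (n + 1)) :
    Bq i j ∈ (LieSubalgebra.lieSpan ℤ (LnAlg (n + 1)) (genSet n)).normalizer := by
  set S := LieSubalgebra.lieSpan ℤ (LnAlg (n + 1)) (genSet n) with hS
  rw [LieSubalgebra.mem_normalizer_iff]
  intro y hy
  by_cases hij : i = j
  · rw [hij, Bq_self, zero_lie]; exact S.zero_mem
  by_cases hj : j = Fin.last n
  · subst hj
    exact S.lie_mem (LieSubalgebra.subset_lieSpan ⟨i, hij, rfl⟩) hy
  by_cases hi : i = Fin.last n
  · subst hi
    rw [Bq_symm]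
    exact S.lie_mem (LieSubalgebra.subset_lieSpan ⟨j, fun h => hij h.symm, rfl⟩) hy
  · -- both i, j ≠ last
    have main : y ∈ S ∧ ⁅Bq i j, y⁆ ∈ S := by
      refine LieSubalgebra.lieSpan_induction ℤ
        (p := fun y _ => y ∈ S ∧ ⁅Bq i j, y⁆ ∈ S) ?_ ?_ ?_ ?_ ?_ hy
      · rintro z ⟨p, hp, rfl⟩
        exact ⟨LieSubalgebra.subset_lieSpan ⟨p, hp, rfl⟩, key i j p hi hj⟩
      · simp only [lie_zero]; exact ⟨S.zero_mem, S.zero_mem⟩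
      · intro a b _ _ ha hb
        refine ⟨S.add_mem ha.1 hb.1, ?_⟩
        rw [lie_add]; exact S.add_mem ha.2 hb.2
      · intro r z _ hz
        refine ⟨S.smul_mem r hz.1, ?_⟩
        rw [lie_smul]; exact S.smul_mem r hz.2
      · intro a b _ _ ha hb
        refine ⟨S.lie_mem ha.1 hb.1, ?_⟩
        rw [leibniz_lie]
        exact S.add_mem (S.lie_mem ha.2 hb.1) (S.lie_mem ha.1 hb.2)
    exact main.2

lemma free_span_top {X : Type*} (z : FreeLieAlgebra ℤ X) :
    z ∈ LieSubalgebra.lieSpan ℤ (FreeLieAlgebra ℤ X) (Set.range (FreeLieAlgebra.of ℤ)) := by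
  set K := LieSubalgebra.lieSpan ℤ (FreeLieAlgebra ℤ X) (Set.range (FreeLieAlgebra.of ℤ)) with hK
  let f : FreeLieAlgebra ℤ X →ₗ⁅ℤ⁆ K :=
    FreeLieAlgebra.lift ℤ fun x => ⟨FreeLieAlgebra.of ℤ x,
      LieSubalgebra.subset_lieSpan ⟨x, rfl⟩⟩
  have hcomp : K.incl.comp f = LieHom.id := by
    apply FreeLieAlgebra.hom_ext
    intro x
    exact congrArg K.incl (FreeLieAlgebra.lift_of_apply (R := ℤ) _ x)
  have : K.incl (f z) = z := by
    have := LieHom.congr_fun hcomp z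
    simpa using this
  rw [← this]
  exact (f z).2

lemma all_normalizer (x : LnAlg (n + 1)) :
    x ∈ (LieSubalgebra.lieSpan ℤ (LnAlg (n + 1)) (genSet n)).normalizer := by
  obtain ⟨z, rfl⟩ := LieSubmodule.Quotient.surjective_mk' (pbIdeal (n + 1)) x
  set N := (LieSubalgebra.lieSpan ℤ (LnAlg (n + 1)) (genSet n)).normalizer with hN
  have hz := free_span_top z
  refine LieSubalgebra.lieSpan_induction ℤ
    (p := fun z _ => LieSubmodule.Quotient.mk' (pbIdeal (n + 1)) z ∈ N) ?_ ?_ ?_ ?_ ?_ hz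
  · rintro w ⟨p, rfl⟩
    show LieSubmodule.Quotient.mk' (pbIdeal (n + 1)) (FreeLieAlgebra.of ℤ p) ∈ N
    have : LieSubmodule.Quotient.mk' (pbIdeal (n + 1)) (FreeLieAlgebra.of ℤ p)
        = Bq p.1.1 p.1.2 := by
      unfold Bq Bpre
      rw [dif_pos p.2]
    rw [this]
    exact gen_normalizer p.1.1 p.1.2
  · show LieSubmodule.Quotient.mk' (pbIdeal (n + 1)) 0 ∈ N
    rw [map_zero]; exact N.zero_mem
  · intro a b _ _ ha hb
    show LieSubmodule.Quotient.mk' (pbIdeal (n + 1)) (a + b) ∈ N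
    rw [map_add]; exact N.add_mem ha hb
  · intro r w _ hw
    show LieSubmodule.Quotient.mk' (pbIdeal (n + 1)) (r • w) ∈ N
    rw [map_smul]; exact N.smul_mem r hw
  · intro a b _ _ ha hb
    show LieSubmodule.Quotient.mk' (pbIdeal (n + 1)) ⁅a, b⁆ ∈ N
    have : LieSubmodule.Quotient.mk' (pbIdeal (n + 1)) ⁅a, b⁆
        = ⁅LieSubmodule.Quotient.mk' (pbIdeal (n + 1)) a,
            LieSubmodule.Quotient.mk' (pbIdeal (n + 1)) b⁆ := rfl
    rw [this]; exact N.lie_mem ha hb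

end Aux

/-- The Lie subalgebra of `L(n+1)` generated by `{B_{1,n}, …, B_{n-1,n}}` is a Lie ideal. -/
theorem top_subalgebra_is_ideal (n : ℕ) (x y : LnAlg (n + 1))
    (hy : y ∈ LieSubalgebra.lieSpan ℤ (LnAlg (n + 1))
      {z | ∃ p : Fin (n + 1), p ≠ Fin.last n ∧ z = Bq p (Fin.last n)}) :
    ⁅x, y⁆ ∈ LieSubalgebra.lieSpan ℤ (LnAlg (n + 1))
      {z | ∃ p : Fin (n + 1), p ≠ Fin.last n ∧ z = Bq p (Fin.last n)} :=
  (LieSubalgebra.mem_normalizer_iff _ x).1 (all_normalizer x) y hy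
end

section
/- In L(n) with n > 2, if a degree-1 element x = Σ_{1 ≤ i < j ≤ n} α_{i,j} B_{i,j} (with integer coefficients α_{i,j}) satisfies [x, B_{p,n}] = 0 for all 1 ≤ p ≤ n-1, then all coefficients α_{i,j} are equal, i.e., x is an integer multiple of Δ(n) = Σ_{i<j} B_{i,j}. -/
open FreeLieAlgebra

/-! ### Auxiliary constructions: detecting homomorphisms into 3×3 matrices -/

namespace DegOneAux

abbrev M3 : Type := Matrix (Fin 3) (Fin 3) ℤ

attribute [local instance] LieRing.ofAssociativeRing

def eu : M3 := Matrix.single 0 1 1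
def ev : M3 := Matrix.single 1 2 1

variable {m : ℕ}

/-- Vertex vectors: `a ↦ eu`, `b ↦ ev`, `c ↦ -eu - ev`, else `0`. -/
def wv (a b c x : Fin m) : M3 :=
  if x = a then eu else if x = b then ev else if x = c then -eu - ev else 0

/-- Indicator of the triangle `{a, b, c}`. -/
def chi (a b c x : Fin m) : ℤ := if x = a ∨ x = b ∨ x = c then 1 else 0

/-- Value of the detecting homomorphism on the generator `B_{i,j}`. -/
def F (a b c i j : Fin m) : M3 :=
  (chi a b c i * chi a b c j) • (wv a b c i + wv a b c j)

def theta (a b c x : Fin m) : ℤ := if x = b then 1 else if x = c then -1 else 0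

lemma F_symm (a b c i j : Fin m) : F a b c i j = F a b c j i := by
  unfold F; rw [mul_comm, add_comm]

/-- The detecting Lie algebra homomorphism. -/
noncomputable def phi (a b c : Fin m) : FreeLieAlgebra ℤ (PBGen m) →ₗ⁅ℤ⁆ M3 :=
  FreeLieAlgebra.lift ℤ (fun p => F a b c p.1.1 p.1.2)

lemma Bpre_self (i : Fin m) : Bpre i i = (0 : FreeLieAlgebra ℤ (PBGen m)) := by
  simp [Bpre]

lemma phi_Bpre (a b c : Fin m) {i j : Fin m} (hij : i ≠ j) :
    phi a b c (Bpre i j) = F a b c i j := by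
  rcases hij.lt_or_gt with h | h
  · rw [Bpre, dif_pos h, phi]; erw [lift_of_apply]
  · rw [Bpre, dif_neg (asymm h), dif_pos h, phi]; erw [lift_of_apply]
    exact (F_symm a b c i j).symm

section Triangle

variable {a b c : Fin m} (hab : a ≠ b) (hac : a ≠ c) (hbc : b ≠ c)

include hab hac hbc

lemma wv_sum {i j s : Fin m} (hij : i ≠ j) (hjs : j ≠ s) (his : i ≠ s)
    (hi : i = a ∨ i = b ∨ i = c) (hj : j = a ∨ j = b ∨ j = c)
    (hs : s = a ∨ s = b ∨ s = c) :
    wv a b c i + wv a b c j + wv a b c s = 0 := by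
  rcases hi with rfl | rfl | rfl <;> rcases hj with rfl | rfl | rfl <;>
    rcases hs with rfl | rfl | rfl <;> simp_all [wv, eq_comm] <;> abel

lemma phi_rel : ∀ r ∈ pbRelations m, phi a b c r = 0 := by
  rintro r (⟨i, j, s, t, hdisj, rfl⟩ | ⟨i, j, s, hij, hjs, his, rfl⟩)
  · -- disjoint-supports relation
    have hmem : ∀ x : Fin m, x ∉ ({i, j} ∩ {s, t} : Set (Fin m)) := by
      rw [hdisj]; simp
    have his : i ≠ s := fun h => hmem i ⟨Or.inl rfl, Or.inl h⟩
    have hit : i ≠ t := fun h => hmem i ⟨Or.inl rfl, Or.inr h⟩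
    have hjs : j ≠ s := fun h => hmem j ⟨Or.inr rfl, Or.inl h⟩
    have hjt : j ≠ t := fun h => hmem j ⟨Or.inr rfl, Or.inr h⟩
    by_cases hij : i = j
    · subst hij; simp [Bpre_self]
    by_cases hst : s = t
    · subst hst; simp [Bpre_self]
    rw [LieHom.map_lie, phi_Bpre a b c hij, phi_Bpre a b c hst]
    by_cases h1 : (i = a ∨ i = b ∨ i = c) ∧ (j = a ∨ j = b ∨ j = c) ∧
        (s = a ∨ s = b ∨ s = c) ∧ (t = a ∨ t = b ∨ t = c)
    · exfalso
      obtain ⟨hi, hj, hs, ht⟩ := h1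
      rcases hi with rfl | rfl | rfl <;> rcases hj with rfl | rfl | rfl <;>
        rcases hs with rfl | rfl | rfl <;> rcases ht with rfl | rfl | rfl <;> simp_all
    · have hz : F a b c i j = 0 ∨ F a b c s t = 0 := by
        unfold F chi
        rcases (by tauto :
            ¬(i = a ∨ i = b ∨ i = c) ∨ ¬(j = a ∨ j = b ∨ j = c) ∨
            ¬(s = a ∨ s = b ∨ s = c) ∨ ¬(t = a ∨ t = b ∨ t = c)) with h | h | h | h
        · left; rw [if_neg h]; simp
        · left; rw [if_neg h]; simp
        · right; rw [if_neg h]; simp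
        · right; rw [if_neg h]; simp
      rcases hz with h | h <;> simp [h]
  · -- triangle relation
    have hsj : s ≠ j := hjs.symm
    rw [LieHom.map_lie, map_add, phi_Bpre a b c hij, phi_Bpre a b c his, phi_Bpre a b c hsj]
    by_cases hi : i = a ∨ i = b ∨ i = c
    · by_cases hj : j = a ∨ j = b ∨ j = c
      · by_cases hs : s = a ∨ s = b ∨ s = c
        · -- all three vertices in the triangle
          have hsum := wv_sum hab hac hbc hij hjs his hi hj hs
          have hchi : ∀ x : Fin m, (x = a ∨ x = b ∨ x = c) → chi a b c x = 1 := by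
            intro x hx; simp [chi, hx]
          have e1 : F a b c i j = -wv a b c s := by
            rw [F, hchi i hi, hchi j hj, one_mul, one_smul]
            linear_combination (norm := abel) hsum
          have e2 : F a b c i s + F a b c s j = wv a b c s := by
            rw [F, F, hchi i hi, hchi j hj, hchi s hs, one_mul, one_smul, one_smul]
            linear_combination (norm := abel) hsum
          rw [e1, e2, neg_lie, lie_self, neg_zero]
        · have : F a b c i s = 0 ∧ F a b c s j = 0 := by
            constructor <;> · unfold F chi; rw [if_neg hs]; simp
          rw [this.1, this.2, add_zero, lie_zero]
      · have : F a b c i j = 0 := by unfold F chi; rw [if_neg hj]; simp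
        rw [this, zero_lie]
    · have : F a b c i j = 0 := by unfold F chi; rw [if_neg hi]; simp
      rw [this, zero_lie]

lemma pbIdeal_le_ker : pbIdeal m ≤ (phi a b c).ker :=
  LieSubmodule.lieSpan_le.mpr fun r hr => LieHom.mem_ker.mpr (phi_rel hab hac hbc r hr)

lemma theta_spec (x : Fin m) : ⁅wv a b c x, -eu⁆ 0 2 = theta a b c x := by
  unfold wv theta
  split_ifs <;> first | decide | simp_all

lemma F_bc : F a b c b c = -eu := by
  have h1 : chi a b c b = 1 := by simp [chi]
  have h2 : chi a b c c = 1 := by simp [chi]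
  have h3 : wv a b c b = ev := by simp [wv, Ne.symm hab]
  have h4 : wv a b c c = -eu - ev := by simp [wv, Ne.symm hac, Ne.symm hbc]
  rw [F, h1, h2, h3, h4, one_mul, one_smul]
  abel

lemma entry (i j : Fin m) :
    ⁅F a b c i j, -eu⁆ 0 2 = chi a b c i * chi a b c j * (theta a b c i + theta a b c j) := by
  rw [F, smul_lie, add_lie]
  rw [Matrix.smul_apply, Matrix.add_apply, smul_eq_mul,
    theta_spec hab hac hbc, theta_spec hab hac hbc]

end Triangle

lemma sum_lie_aux {ι : Type*} (s : Finset ι) (f : ι → M3) (y : M3) :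
    ⁅∑ i ∈ s, f i, y⁆ = ∑ i ∈ s, ⁅f i, y⁆ := by
  induction s using Finset.cons_induction with
  | empty => simp
  | cons a s ha ih => rw [Finset.sum_cons, Finset.sum_cons, add_lie, ih]

/-- The (unordered) edge `{i,j}` as an element of `PBGen m`. -/
def edg {i j : Fin m} (h : i ≠ j) : PBGen m :=
  if hl : i < j then ⟨(i, j), hl⟩ else ⟨(j, i), h.lt_or_gt.resolve_left hl⟩

lemma edg_comm {i j : Fin m} (h : i ≠ j) : edg h = edg h.symm := by
  rcases h.lt_or_gt with hl | hl
  · rw [edg, dif_pos hl, edg, dif_neg (asymm hl)]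
  · rw [edg, dif_neg (asymm hl), edg, dif_pos hl]

lemma edg_eq_iff {a b i j : Fin m} (hab : a ≠ b) (hij : i < j) :
    (⟨(i, j), hij⟩ : PBGen m) = edg hab ↔ (i = a ∧ j = b) ∨ (i = b ∧ j = a) := by
  rcases hab.lt_or_gt with h | h
  · rw [edg, dif_pos h, Subtype.mk.injEq, Prod.mk.injEq]
    constructor
    · exact fun h' => Or.inl h'
    · rintro (⟨rfl, rfl⟩ | ⟨rfl, rfl⟩)
      · exact ⟨rfl, rfl⟩
      · exact absurd hij (asymm h)
  · rw [edg, dif_neg (asymm h), Subtype.mk.injEq, Prod.mk.injEq]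
    constructor
    · exact fun h' => Or.inr h'
    · rintro (⟨rfl, rfl⟩ | ⟨rfl, rfl⟩)
      · exact absurd hij (asymm h)
      · exact ⟨rfl, rfl⟩

set_option maxHeartbeats 1600000 in
lemma indic {a b c : Fin m} (hab : a ≠ b) (hac : a ≠ c) (hbc : b ≠ c)
    {i j : Fin m} (hij : i < j) :
    chi a b c i * chi a b c j * (theta a b c i + theta a b c j)
      = (if (⟨(i, j), hij⟩ : PBGen m) = edg hab then 1 else 0)
        - (if (⟨(i, j), hij⟩ : PBGen m) = edg hac then 1 else 0) := by
  have hijne : i ≠ j := ne_of_lt hij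
  simp only [edg_eq_iff hab hij, edg_eq_iff hac hij, chi, theta]
  by_cases h1 : i = a <;> by_cases h2 : i = b <;> by_cases h3 : i = c <;>
    by_cases h4 : j = a <;> by_cases h5 : j = b <;> by_cases h6 : j = c <;>
    simp_all

end DegOneAux

attribute [local instance] LieRing.ofAssociativeRing

open DegOneAux in
/-- Key step: if `⁅Σ α_p B_p, B_{b,c}⁆` lies in the ideal of relations, then
`α_{a,b} = α_{a,c}` for any `a` distinct from `b` and `c`. -/
lemma key_step {m : ℕ} {a b c : Fin m} (hab : a ≠ b) (hac : a ≠ c) (hbc : b ≠ c)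
    (α : PBGen m → ℤ)
    (H : ⁅∑ p : PBGen m, α p • FreeLieAlgebra.of ℤ p, Bpre b c⁆ ∈ pbIdeal m) :
    α (edg hab) = α (edg hac) := by
  have h0 : phi a b c ⁅∑ p : PBGen m, α p • FreeLieAlgebra.of ℤ p, Bpre b c⁆ = 0 :=
    LieHom.mem_ker.mp (pbIdeal_le_ker hab hac hbc H)
  rw [LieHom.map_lie, phi_Bpre a b c hbc, F_bc hab hac hbc] at h0
  have hs : phi a b c (∑ p : PBGen m, α p • FreeLieAlgebra.of ℤ p)
      = ∑ p : PBGen m, α p • F a b c p.1.1 p.1.2 := by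
    rw [← LieHom.coe_toLinearMap, map_sum]
    refine Finset.sum_congr rfl fun p _ => ?_
    rw [map_smul, LieHom.coe_toLinearMap, phi]; erw [lift_of_apply]
  rw [hs] at h0
  have h2 : (⁅∑ p : PBGen m, α p • F a b c p.1.1 p.1.2, -eu⁆ : M3) 0 2 = 0 := by
    rw [h0]; rfl
  rw [sum_lie_aux] at h2
  rw [Matrix.sum_apply] at h2
  have h3 : ∀ p : PBGen m, (⁅α p • F a b c p.1.1 p.1.2, -eu⁆ : M3) 0 2
      = α p * ((if p = edg hab then 1 else 0) - (if p = edg hac then 1 else 0)) := by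
    intro p
    rw [smul_lie, Matrix.smul_apply, smul_eq_mul, entry hab hac hbc]
    congr 1
    have : p = (⟨(p.1.1, p.1.2), p.2⟩ : PBGen m) := by
      ext <;> rfl
    rw [this]
    exact indic hab hac hbc p.2
  rw [Finset.sum_congr rfl (fun p _ => h3 p)] at h2
  simp only [mul_sub, mul_ite, mul_one, mul_zero] at h2
  rw [Finset.sum_sub_distrib, Finset.sum_ite_eq' Finset.univ (edg hab) α,
    Finset.sum_ite_eq' Finset.univ (edg hac) α] at h2
  simp only [Finset.mem_univ, if_true] at h2
  linarith

/-- If a degree-1 element `x = Σ α_{i,j} B_{i,j}` of `L(n+1)` (with `n + 1 > 2`) commutes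
with every `B_{p,n+1}`, then all coefficients `α_{i,j}` are equal, i.e. `x` is an integer
multiple of `Δ(n+1)`. -/
theorem degree_one_centralizer (n : ℕ) (hn : 2 ≤ n) (α : PBGen (n + 1) → ℤ)
    (x : LnAlg (n + 1))
    (hx : x = ∑ p : PBGen (n + 1),
      α p • LieSubmodule.Quotient.mk' (pbIdeal (n + 1)) (FreeLieAlgebra.of ℤ p))
    (hcomm : ∀ p : Fin n, ⁅x, Bq p.castSucc (Fin.last n)⁆ = 0) :
    (∀ p q : PBGen (n + 1), α p = α q) ∧ ∃ c : ℤ, x = c • Delta (n + 1) := by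
  classical
  set X : FreeLieAlgebra ℤ (PBGen (n + 1)) := ∑ p : PBGen (n + 1), α p • FreeLieAlgebra.of ℤ p
    with hX
  have hxX : x = LieSubmodule.Quotient.mk' (pbIdeal (n + 1)) X := by
    rw [hx, hX, ← LieModuleHom.coe_toLinearMap, map_sum]
    exact Finset.sum_congr rfl fun p _ => by
      rw [map_smul, LieModuleHom.coe_toLinearMap]
  -- membership of brackets in the ideal
  have hmem : ∀ b : Fin (n + 1), b ≠ Fin.last n →
      ⁅X, Bpre b (Fin.last n)⁆ ∈ pbIdeal (n + 1) := by
    intro b hb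
    have hblt : (b : ℕ) < n := by
      have := b.isLt
      have : (b : ℕ) ≠ n := fun h => hb (Fin.ext h)
      omega
    have hC : (⟨(b : ℕ), hblt⟩ : Fin n).castSucc = b := by
      ext; rfl
    have h := hcomm ⟨(b : ℕ), hblt⟩
    rw [hC, hxX] at h
    have : LieSubmodule.Quotient.mk' (pbIdeal (n + 1)) ⁅X, Bpre b (Fin.last n)⁆ = 0 := by
      rw [← h, Bq]
      rfl
    rwa [← LieSubmodule.Quotient.mk_eq_zero]
  -- the key relation among coefficients
  have hkey : ∀ (a b : Fin (n + 1)) (hab : a ≠ b) (haN : a ≠ Fin.last n)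
      (hbN : b ≠ Fin.last n), α (DegOneAux.edg hab) = α (DegOneAux.edg haN) :=
    fun a b hab haN hbN => key_step hab haN hbN α (hmem b hbN)
  -- all coefficients are equal to `α (edg h0N)`
  have h0N : (0 : Fin (n + 1)) ≠ Fin.last n := by
    intro h
    have := congrArg Fin.val h
    simp [Fin.last] at this
    omega
  set c0 : ℤ := α (DegOneAux.edg h0N) with hc0
  have step1 : ∀ (i : Fin (n + 1)) (hiN : i ≠ Fin.last n), i ≠ 0 →
      α (DegOneAux.edg hiN) = c0 := by
    intro i hiN hi0
    have h1 : α (DegOneAux.edg hi0) = α (DegOneAux.edg hiN) := hkey i 0 hi0 hiN h0N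
    have h2 : α (DegOneAux.edg (Ne.symm hi0)) = α (DegOneAux.edg h0N) :=
      hkey 0 i (Ne.symm hi0) h0N hiN
    rw [← h1, DegOneAux.edg_comm, h2]
  have hall : ∀ p : PBGen (n + 1), α p = c0 := by
    intro p
    obtain ⟨⟨i, j⟩, hij⟩ := p
    have hijne : i ≠ j := ne_of_lt hij
    have hpe : α (⟨(i, j), hij⟩ : PBGen (n + 1)) = α (DegOneAux.edg hijne) := by
      rw [DegOneAux.edg, dif_pos hij]
    rw [hpe]
    have hiN : i ≠ Fin.last n := by
      intro h
      have hj := j.isLt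
      have := hij
      rw [h] at this
      exact absurd (this.trans_le (Fin.le_last j)) (lt_irrefl _)
    by_cases hjN : j = Fin.last n
    · subst hjN
      by_cases hi0 : i = 0
      · subst hi0; rw [hc0]
      · exact step1 i hiN hi0
    · have h1 : α (DegOneAux.edg hijne) = α (DegOneAux.edg hiN) :=
        hkey i j hijne hiN hjN
      rw [h1]
      by_cases hi0 : i = 0
      · subst hi0; rw [hc0]
      · exact step1 i hiN hi0
  refine ⟨fun p q => (hall p).trans (hall q).symm, c0, ?_⟩
  rw [hx, Delta, Finset.smul_sum]
  exact Finset.sum_congr rfl fun p _ => by rw [hall p]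
end

section
/- Let f: P → G be a group homomorphism where P is residually nilpotent, and suppose the associated graded Lie ring E₀^*(P) has the property that every nonzero element x with [x, w] = 0 for all w in a fixed Lie ideal W lies in a subspace Z on which E₀^*(f) is injective, and E₀^*(f) restricted to W is injective. Then E₀^*(f) is injective and hence f is injective. -/
open Subgroup
open scoped commutatorElement

lemma commutator_lcs_le_lcs_aux {G : Type*} [Group G] (m n : ℕ) :
    ⁅(⊤ : Subgroup G).lowerCentralSeries m, (⊤ : Subgroup G).lowerCentralSeries n⁆ ≤ (⊤ : Subgroup G).lowerCentralSeries (m + n + 1) := by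
  induction n generalizing m with
  | zero =>
    have : (⊤ : Subgroup G).lowerCentralSeries (m + 1) = ⁅(⊤ : Subgroup G).lowerCentralSeries m, ⊤⁆ := rfl
    simpa [Subgroup.lowerCentralSeries_zero] using le_of_eq this.symm
  | succ n ih =>
    set N := (⊤ : Subgroup G).lowerCentralSeries (m + (n + 1) + 1) with hN
    have hnormal : N.Normal := inferInstance
    set π := QuotientGroup.mk' N
    have hker : π.ker = N := QuotientGroup.ker_mk' N
    have key : ∀ A B C : Subgroup G, ⁅⁅A, B⁆, C⁆ ≤ N ↔ ⁅⁅map π A, map π B⁆, map π C⁆ = ⊥ := by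
      intro A B C
      rw [← map_commutator, ← map_commutator, Subgroup.map_eq_bot_iff, hker]
    have h1 : ⁅⁅(⊤ : Subgroup G), (⊤ : Subgroup G).lowerCentralSeries m⁆, (⊤ : Subgroup G).lowerCentralSeries n⁆ ≤ N := by
      have e1 : ⁅(⊤ : Subgroup G), (⊤ : Subgroup G).lowerCentralSeries m⁆ = (⊤ : Subgroup G).lowerCentralSeries (m + 1) := by
        rw [commutator_comm]; rfl
      rw [e1]
      have := ih (m + 1)
      simpa [hN, Nat.add_assoc, Nat.add_comm, Nat.add_left_comm] using this
    have h2 : ⁅⁅(⊤ : Subgroup G).lowerCentralSeries m, (⊤ : Subgroup G).lowerCentralSeries n⁆, (⊤ : Subgroup G)⁆ ≤ N := by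
      calc ⁅⁅(⊤ : Subgroup G).lowerCentralSeries m, (⊤ : Subgroup G).lowerCentralSeries n⁆, (⊤ : Subgroup G)⁆
          ≤ ⁅(⊤ : Subgroup G).lowerCentralSeries (m + n + 1), (⊤ : Subgroup G)⁆ :=
            commutator_mono (ih m) le_rfl
        _ = (⊤ : Subgroup G).lowerCentralSeries (m + n + 2) := rfl
        _ = N := by rw [hN]; ring_nf
    have h3 : ⁅⁅(⊤ : Subgroup G).lowerCentralSeries n, (⊤ : Subgroup G)⁆, (⊤ : Subgroup G).lowerCentralSeries m⁆ ≤ N := by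
      rw [key]
      exact commutator_commutator_eq_bot_of_rotate ((key _ _ _).mp h1) ((key _ _ _).mp h2)
    have : (⊤ : Subgroup G).lowerCentralSeries (n + 1) = ⁅(⊤ : Subgroup G).lowerCentralSeries n, (⊤ : Subgroup G)⁆ := rfl
    rw [commutator_comm, this]
    exact h3



/-- Let `f : P → G` be a homomorphism with `P` residually nilpotent.  The associated
graded Lie ring `E₀^*(P)` of the lower central series is described degreewise:
`E₀^{k+1}(P) = Γ^{k+1}(P)/Γ^{k+2}(P)` where `Γ^{k+1} = (⊤ : Subgroup P).lowerCentralSeries k`.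
Let `W` be a Lie ideal of `E₀^*(P)`, encoded as a family of subsets `W k` of
`Γ^{k+1}(P)` which are unions of cosets of `Γ^{k+2}(P)` and satisfy the ideal
condition `[Γ^{p+1}, W q] ⊆ W (p+q+1)` (in filtration degree `p+q+2`).  Suppose that
`E₀^*(f)` is injective on `W` and injective on the centralizer `Z` of `W` (every `x`
whose brackets with all elements of `W` vanish in the associated graded lies in `Z`,
and `E₀^*(f)` is injective there).  Then `E₀^*(f)` is injective and hence `f` is
injective. -/
theorem injective_of_injective_on_ideal_and_centralizer {P G : Type*} [Group P]
    [Group G] (f : P →* G) (hres : (⨅ k : ℕ, (⊤ : Subgroup P).lowerCentralSeries k) = ⊥)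
    (W : ℕ → Set P)
    (hW : ∀ k, W k ⊆ (⊤ : Subgroup P).lowerCentralSeries k)
    (hWcoset : ∀ k, ∀ x ∈ W k, ∀ y ∈ (⊤ : Subgroup P).lowerCentralSeries (k + 1), x * y ∈ W k)
    (hWideal : ∀ p q : ℕ, ∀ x ∈ (⊤ : Subgroup P).lowerCentralSeries p, ∀ w ∈ W q,
      ⁅x, w⁆ ∈ W (p + q + 1))
    -- `E₀^*(f)` is injective on the ideal `W`
    (hWinj : ∀ k, ∀ x ∈ W k,
      f x ∈ (⊤ : Subgroup G).lowerCentralSeries (k + 1) → x ∈ (⊤ : Subgroup P).lowerCentralSeries (k + 1))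
    -- `E₀^*(f)` is injective on the centralizer `Z` of `W`
    (hZinj : ∀ k, ∀ x ∈ (⊤ : Subgroup P).lowerCentralSeries k,
      (∀ q : ℕ, ∀ w ∈ W q, ⁅x, w⁆ ∈ (⊤ : Subgroup P).lowerCentralSeries (k + q + 2)) →
      f x ∈ (⊤ : Subgroup G).lowerCentralSeries (k + 1) → x ∈ (⊤ : Subgroup P).lowerCentralSeries (k + 1)) :
    (∀ k : ℕ, ∀ x ∈ (⊤ : Subgroup P).lowerCentralSeries k,
      f x ∈ (⊤ : Subgroup G).lowerCentralSeries (k + 1) → x ∈ (⊤ : Subgroup P).lowerCentralSeries (k + 1)) ∧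
    Function.Injective f := by
  have main : ∀ k : ℕ, ∀ x ∈ (⊤ : Subgroup P).lowerCentralSeries k,
      f x ∈ (⊤ : Subgroup G).lowerCentralSeries (k + 1) → x ∈ (⊤ : Subgroup P).lowerCentralSeries (k + 1) := by
    intro k x hx hfx
    refine hZinj k x hx ?_ hfx
    intro q w hw
    have hy : ⁅x, w⁆ ∈ W (k + q + 1) := hWideal k q x hx w hw
    have hfw : f w ∈ (⊤ : Subgroup G).lowerCentralSeries q :=
      lowerCentralSeries.map f q (Subgroup.mem_map_of_mem f (hW q hw))
    have hfy : f ⁅x, w⁆ ∈ (⊤ : Subgroup G).lowerCentralSeries (k + q + 2) := by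
      rw [map_commutatorElement]
      have := commutator_lcs_le_lcs_aux (G := G) (k + 1) q
        (Subgroup.commutator_mem_commutator hfx hfw)
      simpa [Nat.add_assoc, Nat.add_comm, Nat.add_left_comm] using this
    exact hWinj (k + q + 1) ⁅x, w⁆ hy hfy
  refine ⟨main, ?_⟩
  intro a b hab
  have hc : f (a * b⁻¹) = 1 := by
    simp [map_mul, hab, mul_inv_eq_one]
  have hmem : ∀ k : ℕ, a * b⁻¹ ∈ (⊤ : Subgroup P).lowerCentralSeries k := by
    intro k
    induction k with
    | zero => exact Subgroup.mem_top _
    | succ k ih => exact main k _ ih (by rw [hc]; exact one_mem _)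
  have : a * b⁻¹ ∈ (⊥ : Subgroup P) := by
    rw [← hres]
    exact Subgroup.mem_iInf.mpr hmem
  rw [Subgroup.mem_bot, mul_inv_eq_one] at this
  exact this
end
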